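/- arXiv:1112.2855 — 2 statements merged into one kernel-verified Lean document; each statement's English description precedes it below -/
import Mathlib

section
/- Let T ∈ G_γ^d, φ ∈ F_β^r, and φ_m be the Galerkin solution of g = Tφ, under the Assumption (1/β and γ non-increasing with limit zero, β_1 = γ_1 = 1, Σ_j [ℓ]_j²/β_j < ∞, Σ_j γ_j < ∞). Then for all m ∈ ℕ: |ℓ(φ − φ_m)|² ≤ 2r·{ Σ_{j>m} [ℓ]_j²/β_j + 2(1 + d⁴)·(γ_m/β_m)·Σ_{j=1}^m [ℓ]_j²/γ_j }. -/
open scoped RealInnerProductSpace Classical ENNReal NNReal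
open Matrix MeasureTheory

noncomputable section

variable {H : Type} [NormedAddCommGroup H] [InnerProductSpace ℝ H] [CompleteSpace H]

/-- Spectral norm of a real matrix (largest singular value). -/
def specNorm {m : ℕ} (A : Matrix (Fin m) (Fin m) ℝ) : ℝ :=
  ‖Matrix.toEuclideanCLM (𝕜 := ℝ) A‖

/-- Galerkin matrix `[T]_m = (⟪ψ_j, T ψ_k⟫)_{1≤j,k≤m}` (0-indexed). -/
def opMat (ψ : HilbertBasis ℕ ℝ H) (T : H →L[ℝ] H) (m : ℕ) :
    Matrix (Fin m) (Fin m) ℝ :=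
  Matrix.of fun j k => ⟪ψ (j : ℕ), T (ψ (k : ℕ))⟫

/-- The ellipsoid `F_β^r`. -/
def memF (ψ : HilbertBasis ℕ ℝ H) (β : ℕ → ℝ) (r : ℝ) (h : H) : Prop :=
  Summable (fun j => β j * ⟪h, ψ j⟫ ^ 2) ∧ (∑' j, β j * ⟪h, ψ j⟫ ^ 2) ≤ r

/-- The class `G_γ^d` of strictly positive nuclear operators with sandwiched norm. -/
def memG (ψ : HilbertBasis ℕ ℝ H) (γ : ℕ → ℝ) (d : ℝ) (T : H →L[ℝ] H) : Prop :=
  (∀ x y : H, ⟪T x, y⟫ = ⟪x, T y⟫) ∧ (∀ h : H, h ≠ 0 → 0 < ⟪T h, h⟫) ∧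
    Summable (fun j => ⟪T (ψ j), ψ j⟫) ∧
    ∀ h : H,
      (d ^ 2)⁻¹ * (∑' j, γ j ^ 2 * ⟪h, ψ j⟫ ^ 2) ≤ ‖T h‖ ^ 2 ∧
      ‖T h‖ ^ 2 ≤ d ^ 2 * (∑' j, γ j ^ 2 * ⟪h, ψ j⟫ ^ 2)

/-- Coefficient vector `[g]_m` of `g = Γ φ`. -/
def gvec (ψ : HilbertBasis ℕ ℝ H) (Γ : H →L[ℝ] H) (φ : H) (m : ℕ) : Fin m → ℝ :=
  fun j => ⟪Γ φ, ψ (j : ℕ)⟫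

/-- Coefficients `[Γ]_m⁻¹ [g]_m` of the Galerkin solution. -/
def galCoef (ψ : HilbertBasis ℕ ℝ H) (Γ : H →L[ℝ] H) (φ : H) (m : ℕ) : Fin m → ℝ :=
  (opMat ψ Γ m)⁻¹ *ᵥ gvec ψ Γ φ m

/-- The Galerkin solution `φ_m`. -/
def galerkin (ψ : HilbertBasis ℕ ℝ H) (Γ : H →L[ℝ] H) (φ : H) (m : ℕ) : H :=
  ∑ j : Fin m, galCoef ψ Γ φ m j • (ψ (j : ℕ))

/-- The linear functional `ℓ(h) = Σ_j ℓ_j ⟨h, ψ_j⟩`. -/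
def ellOf (ψ : HilbertBasis ℕ ℝ H) (lc : ℕ → ℝ) (h : H) : ℝ := ∑' j, lc j * ⟪h, ψ j⟫

/-- `[ℓ]_m`. -/
def ellvec (lc : ℕ → ℝ) (m : ℕ) : Fin m → ℝ := fun j => lc (j : ℕ)

/-- Weighted (squared) norm `‖h‖_w²`. -/
def wnorm2 (ψ : HilbertBasis ℕ ℝ H) (w : ℕ → ℝ) (h : H) : ℝ := ∑' j, w j * ⟪h, ψ j⟫ ^ 2

/-- `V_m^γ = Σ_{j=1}^m ℓ_j²/γ_j`. -/
def Vgam (lc γ : ℕ → ℝ) (m : ℕ) : ℝ := ∑ j ∈ Finset.range m, lc j ^ 2 / γ j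

/-- `V_m = max_{1≤k≤m} [ℓ]_k^t [Γ]_k⁻¹ [ℓ]_k`. -/
def Vmax (ψ : HilbertBasis ℕ ℝ H) (lc : ℕ → ℝ) (Γ : H →L[ℝ] H) (m : ℕ) : ℝ :=
  ⨆ k : Fin m, ellvec lc (k + 1) ⬝ᵥ ((opMat ψ Γ (k + 1))⁻¹ *ᵥ ellvec lc (k + 1))

/-- `σ_m² = 2(σ_Y² + [g]_m^t [Γ]_m⁻¹ [g]_m)` with `σ_Y² = σ² + ⟨Γφ,φ⟩`. -/
def sigmaSqm (ψ : HilbertBasis ℕ ℝ H) (Γ : H →L[ℝ] H) (φ : H) (σ : ℝ) (m : ℕ) : ℝ :=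
  2 * ((σ ^ 2 + ⟪Γ φ, φ⟫) + gvec ψ Γ φ m ⬝ᵥ ((opMat ψ Γ m)⁻¹ *ᵥ gvec ψ Γ φ m))

/-- Theoretical penalty `p_m = 100 σ_m² V_m (1 + log n)/n`. -/
def penTheo (ψ : HilbertBasis ℕ ℝ H) (lc : ℕ → ℝ) (Γ : H →L[ℝ] H) (φ : H) (σ : ℝ)
    (n m : ℕ) : ℝ :=
  100 * sigmaSqm ψ Γ φ σ m * Vmax ψ lc Γ m * ((1 + Real.log n) / n)

/-- `R_m^ℓ[x]` (here `m ≥ 1`; 0-indexed sequences, so `γ_m` is `γ (m-1)`). -/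
def Rml (lc β γ : ℕ → ℝ) (x : ℝ) (m : ℕ) : ℝ :=
  max (∑' j, if m ≤ j then lc j ^ 2 / β j else 0)
    (max (γ (m - 1) / β (m - 1)) x * ∑ j ∈ Finset.range m, lc j ^ 2 / γ j)

/-- `R_*^ℓ[x] = min_{m ≥ 1} R_m^ℓ[x]`. -/
def Rstar (lc β γ : ℕ → ℝ) (x : ℝ) : ℝ := ⨅ m : ℕ, Rml lc β γ x (m + 1)

variable {Ω : Type}

/-- Empirical covariance matrix `[Γ̂]_m`. -/
def hatGam (ψ : HilbertBasis ℕ ℝ H) (n : ℕ) (X : Fin n → Ω → H) (m : ℕ) (ω : Ω) :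
    Matrix (Fin m) (Fin m) ℝ :=
  Matrix.of fun j k => (n : ℝ)⁻¹ * ∑ i, ⟪X i ω, ψ (j : ℕ)⟫ * ⟪X i ω, ψ (k : ℕ)⟫

/-- Empirical vector `[ĝ]_m`. -/
def hatgv (ψ : HilbertBasis ℕ ℝ H) (n : ℕ) (X : Fin n → Ω → H) (Y : Fin n → Ω → ℝ)
    (m : ℕ) (ω : Ω) : Fin m → ℝ :=
  fun j => (n : ℝ)⁻¹ * ∑ i, Y i ω * ⟪X i ω, ψ (j : ℕ)⟫

/-- The thresholded plug-in estimator `ℓ̂_m = ℓ(φ̂_m)`. -/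
def hatell (ψ : HilbertBasis ℕ ℝ H) (lc : ℕ → ℝ) (n : ℕ) (X : Fin n → Ω → H)
    (Y : Fin n → Ω → ℝ) (m : ℕ) (ω : Ω) : ℝ :=
  if IsUnit (hatGam ψ n X m ω).det ∧ specNorm (hatGam ψ n X m ω)⁻¹ ≤ (n : ℝ) then
    ellvec lc m ⬝ᵥ ((hatGam ψ n X m ω)⁻¹ *ᵥ hatgv ψ n X Y m ω)
  else 0

/-- `M_n^ℓ`. -/
def Mln (lc : ℕ → ℝ) (n : ℕ) : ℕ :=
  sSup {m | 1 ≤ m ∧ (m : ℝ) ≤ (n : ℝ) ^ ((1 : ℝ) / 4) ∧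
    (∑ j ∈ Finset.range m, lc j ^ 2) ≤ (n : ℝ)}

/-- Spectral norm of the inverse, `+∞` if singular. -/
def invNormE {m : ℕ} (A : Matrix (Fin m) (Fin m) ℝ) : ℝ≥0∞ :=
  if IsUnit A.det then ENNReal.ofReal (specNorm A⁻¹) else ⊤

/-- Random upper bound `M̂_n`. -/
def Mhat (ψ : HilbertBasis ℕ ℝ H) (lc : ℕ → ℝ) (n : ℕ) (X : Fin n → Ω → H) (ω : Ω) : ℕ :=
  let S := {m | 2 ≤ m ∧ m ≤ Mln lc n ∧
    ENNReal.ofReal ((n : ℝ) / (1 + Real.log n)) <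
      invNormE (hatGam ψ n X m ω) * ENNReal.ofReal (∑ j ∈ Finset.range m, lc j ^ 2)}
  if S.Nonempty then sInf S - 1 else Mln lc n

/-- Deterministic `M_n(a)` (with `a_m = a (m-1)` in 0-indexing). -/
def Mna (lc a : ℕ → ℝ) (n : ℕ) : ℕ :=
  let S := {m | 2 ≤ m ∧ m ≤ Mln lc n ∧
    (n : ℝ) / (1 + Real.log n) < a (m - 1) * ∑ j ∈ Finset.range m, lc j ^ 2}
  if S.Nonempty then sInf S - 1 else Mln lc n

/-- `V̂_m = max_{1≤k≤m} [ℓ]_k^t [Γ̂]_k⁻¹ [ℓ]_k`. -/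
def hatVmax (ψ : HilbertBasis ℕ ℝ H) (lc : ℕ → ℝ) (n : ℕ) (X : Fin n → Ω → H)
    (m : ℕ) (ω : Ω) : ℝ :=
  ⨆ k : Fin m, ellvec lc (k + 1) ⬝ᵥ ((hatGam ψ n X (k + 1) ω)⁻¹ *ᵥ ellvec lc (k + 1))

/-- Stochastic penalty `p̂_m`. -/
def hatpen (ψ : HilbertBasis ℕ ℝ H) (lc : ℕ → ℝ) (n : ℕ) (X : Fin n → Ω → H)
    (Y : Fin n → Ω → ℝ) (m : ℕ) (ω : Ω) : ℝ :=
  700 * (2 * (n : ℝ)⁻¹ * ∑ i, (Y i ω) ^ 2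
      + 2 * (hatgv ψ n X Y m ω ⬝ᵥ ((hatGam ψ n X m ω)⁻¹ *ᵥ hatgv ψ n X Y m ω)))
    * hatVmax ψ lc n X m ω * ((1 + Real.log n) / n)

/-- Contrast `κ_m`. -/
def contrast (ψ : HilbertBasis ℕ ℝ H) (lc : ℕ → ℝ) (n : ℕ) (X : Fin n → Ω → H)
    (Y : Fin n → Ω → ℝ) (m : ℕ) (ω : Ω) : ℝ :=
  sSup {x | ∃ k, m ≤ k ∧ k ≤ Mhat ψ lc n X ω ∧
    x = (hatell ψ lc n X Y k ω - hatell ψ lc n X Y m ω) ^ 2 - hatpen ψ lc n X Y k ω}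

/-- The fully data-driven dimension `m̂` (smallest minimizer of `κ + p̂`). -/
def mhat (ψ : HilbertBasis ℕ ℝ H) (lc : ℕ → ℝ) (n : ℕ) (X : Fin n → Ω → H)
    (Y : Fin n → Ω → ℝ) (ω : Ω) : ℕ :=
  sInf {m | 1 ≤ m ∧ m ≤ Mhat ψ lc n X ω ∧ ∀ k, 1 ≤ k → k ≤ Mhat ψ lc n X ω →
    contrast ψ lc n X Y m ω + hatpen ψ lc n X Y m ω ≤
      contrast ψ lc n X Y k ω + hatpen ψ lc n X Y k ω}

/-- The functional linear model with jointly Gaussian regressor and error,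
observed through an i.i.d. sample of size `n`. -/
structure FLModel [MeasurableSpace H] (ψ : HilbertBasis ℕ ℝ H)
    (σ : ℝ) (φ : H) (Γ : H →L[ℝ] H)
    [MeasurableSpace Ω] (P : Measure Ω) (n : ℕ)
    (X : Fin n → Ω → H) (Y : Fin n → Ω → ℝ) (ε : Fin n → Ω → ℝ) : Prop where
  measX : ∀ i, Measurable (X i)
  measEps : ∀ i, Measurable (ε i)
  modelEq : ∀ i ω, Y i ω = ⟪φ, X i ω⟫ + σ * ε i ω
  indep : ProbabilityTheory.iIndepFun (fun i ω => (X i ω, ε i ω)) P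
  identDistrib : ∀ i j, Measure.map (fun ω => (X i ω, ε i ω)) P
      = Measure.map (fun ω => (X j ω, ε j ω)) P
  centeredX : ∀ i (h : H), ∫ ω, ⟪X i ω, h⟫ ∂P = 0
  sqIntX : ∀ i, Integrable (fun ω => ‖X i ω‖ ^ 2) P
  epsMean : ∀ i, ∫ ω, ε i ω ∂P = 0
  epsVar : ∀ i, ∫ ω, (ε i ω) ^ 2 ∂P = 1
  uncorr : ∀ i (h : H), ∫ ω, ε i ω * ⟪X i ω, h⟫ ∂P = 0
  gaussian : ∀ i (k : ℕ) (hs : Fin k → H) (c : Fin k → ℝ) (c' : ℝ), ∃ v : NNReal,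
      Measure.map (fun ω => (∑ j, c j * ⟪X i ω, hs j⟫) + c' * ε i ω) P
        = ProbabilityTheory.gaussianReal 0 v
  covOp : ∀ i (h h' : H), ⟪Γ h, h'⟫ = ∫ ω, ⟪X i ω, h⟫ * ⟪X i ω, h'⟫ ∂P


section AuxLemmas
set_option maxHeartbeats 1000000
set_option linter.unusedSectionVars false

/-- Cauchy-Schwarz for a nonnegative symmetric bilinear form given by an operator. -/
lemma formCS (T : H →L[ℝ] H) (hsym : ∀ x y : H, ⟪T x, y⟫ = ⟪x, T y⟫)
    (hpos : ∀ h : H, 0 ≤ ⟪T h, h⟫) (x y : H) :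
    ⟪T x, y⟫ ^ 2 ≤ ⟪T x, x⟫ * ⟪T y, y⟫ := by
  have key : ∀ t : ℝ, 0 ≤ ⟪T y, y⟫ * (t * t) + (2 * ⟪T x, y⟫) * t + ⟪T x, x⟫ := by
    intro t
    have h0 := hpos (x + t • y)
    have hexp : ⟪T (x + t • y), x + t • y⟫
        = ⟪T x, x⟫ + t * ⟪T x, y⟫ + (t * ⟪T y, x⟫ + t * t * ⟪T y, y⟫) := by
      rw [_root_.map_add, T.map_smul]
      simp only [inner_add_left, inner_add_right, real_inner_smul_left, real_inner_smul_right,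
        ContinuousLinearMap.coe_smul', Pi.smul_apply, smul_eq_mul]
      ring
    have hyx : ⟪T y, x⟫ = ⟪T x, y⟫ := by
      rw [hsym y x, real_inner_comm]
    rw [hexp, hyx] at h0
    nlinarith [h0]
  have hd := discrim_le_zero key
  rw [discrim] at hd
  nlinarith [hd]

/-- An operator with nonnegative symmetric form bounded by `K‖h‖²` has norm bound `K`. -/
lemma norm_le_of_form (S : H →L[ℝ] H) (hsym : ∀ x y : H, ⟪S x, y⟫ = ⟪x, S y⟫)
    (hpos : ∀ h : H, 0 ≤ ⟪S h, h⟫) (K : ℝ) (hK : 0 ≤ K)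
    (hbound : ∀ h : H, ⟪S h, h⟫ ≤ K * ‖h‖ ^ 2) (h : H) : ‖S h‖ ≤ K * ‖h‖ := by
  have hcs := formCS S hsym hpos h (S h)
  have h1 : ⟪S h, S h⟫ = ‖S h‖ ^ 2 := real_inner_self_eq_norm_sq _
  rw [h1] at hcs
  have h2 : ⟪S (S h), S h⟫ ≤ K * ‖S h‖ ^ 2 := hbound (S h)
  have h3 : ⟪S h, h⟫ ≤ K * ‖h‖ ^ 2 := hbound h
  have h4 : (0:ℝ) ≤ ⟪S h, h⟫ := hpos h
  have h5 : (0:ℝ) ≤ ⟪S (S h), S h⟫ := hpos (S h)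
  rcases eq_or_lt_of_le (norm_nonneg (S h)) with h6 | h6
  · rw [← h6]; positivity
  · have h7 : ‖S h‖ ^ 2 * ‖S h‖ ^ 2 ≤ (K * ‖h‖ ^ 2) * (K * ‖S h‖ ^ 2) := by
      calc ‖S h‖ ^ 2 * ‖S h‖ ^ 2 = (‖S h‖ ^ 2) ^ 2 := by ring
      _ ≤ ⟪S h, h⟫ * ⟪S (S h), S h⟫ := hcs
      _ ≤ (K * ‖h‖ ^ 2) * (K * ‖S h‖ ^ 2) := by
          apply mul_le_mul h3 h2 h5 (by positivity)
    have h8 : ‖S h‖ ^ 2 ≤ K ^ 2 * ‖h‖ ^ 2 := by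
      have hSpos : (0:ℝ) < ‖S h‖ ^ 2 := by positivity
      nlinarith [h7]
    by_contra hcon
    push_neg at hcon
    have hKh : 0 ≤ K * ‖h‖ := by positivity
    nlinarith [h8, hcon, hKh]

/-- Elementary Löwner–Heinz-type lemma: norm domination implies form domination. -/
lemma loewner_forms (A B : H →L[ℝ] H)
    (hAs : ∀ x y : H, ⟪A x, y⟫ = ⟪x, A y⟫) (hBs : ∀ x y : H, ⟪B x, y⟫ = ⟪x, B y⟫)
    (hBpos : ∀ h : H, 0 ≤ ⟪B h, h⟫) (hnorm : ∀ h : H, ‖A h‖ ≤ ‖B h‖) (h : H) :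
    ⟪A h, h⟫ ≤ ⟪B h, h⟫ := by
  by_contra hcon
  push_neg at hcon
  set S : H →L[ℝ] H := A - B with hSdef
  have hSapp : ∀ x : H, S x = A x - B x := fun x => rfl
  have hSsym : ∀ x y : H, ⟪S x, y⟫ = ⟪x, S y⟫ := by
    intro x y
    simp only [hSapp, inner_sub_left, inner_sub_right, hAs, hBs]
  have hS0 : (0:ℝ) < ⟪S h, h⟫ := by
    rw [hSapp, inner_sub_left]; linarith
  have hh0 : h ≠ 0 := by
    intro hz; rw [hz] at hS0; simp at hS0
  -- the set of form values on the unit sphere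
  set Mset : Set ℝ := (fun x : H => ⟪S x, x⟫) '' {x : H | ‖x‖ = 1} with hMset
  have hne : Mset.Nonempty := by
    refine ⟨⟪S (‖h‖⁻¹ • h), ‖h‖⁻¹ • h⟫, ⟨‖h‖⁻¹ • h, ?_, rfl⟩⟩
    simp [norm_smul, abs_of_nonneg, inv_mul_cancel₀ (norm_ne_zero_iff.mpr hh0),
      abs_of_nonneg (inv_nonneg.mpr (norm_nonneg h))]
  have hbdd : BddAbove Mset := by
    refine ⟨‖S‖, ?_⟩
    rintro t ⟨x, hx, rfl⟩
    calc ⟪S x, x⟫ ≤ ‖S x‖ * ‖x‖ := real_inner_le_norm _ _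
    _ ≤ ‖S‖ * ‖x‖ * ‖x‖ := by
        have := S.le_opNorm x; nlinarith [norm_nonneg x]
    _ = ‖S‖ := by rw [Set.mem_setOf_eq.mp hx]; ring
  set M : ℝ := sSup Mset with hM
  have hMpos : 0 < M := by
    have hmem : ⟪S (‖h‖⁻¹ • h), ‖h‖⁻¹ • h⟫ ∈ Mset := by
      refine ⟨‖h‖⁻¹ • h, ?_, rfl⟩
      simp [norm_smul, inv_mul_cancel₀ (norm_ne_zero_iff.mpr hh0),
        abs_of_nonneg (inv_nonneg.mpr (norm_nonneg h))]
    have hle := le_csSup hbdd hmem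
    have hval : ⟪S (‖h‖⁻¹ • h), ‖h‖⁻¹ • h⟫ = ‖h‖⁻¹ * ‖h‖⁻¹ * ⟪S h, h⟫ := by
      rw [_root_.map_smul]
      simp [real_inner_smul_left, real_inner_smul_right]; ring
    have hpos' : 0 < ‖h‖⁻¹ * ‖h‖⁻¹ * ⟪S h, h⟫ := by
      have : 0 < ‖h‖⁻¹ := inv_pos.mpr (norm_pos_iff.mpr hh0)
      positivity
    rw [hval] at hle; linarith
  have hMbound : ∀ x : H, ⟪S x, x⟫ ≤ M * ‖x‖ ^ 2 := by
    intro x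
    rcases eq_or_ne x 0 with rfl | hx0
    · simp
    · have hmem : ⟪S (‖x‖⁻¹ • x), ‖x‖⁻¹ • x⟫ ∈ Mset := by
        refine ⟨‖x‖⁻¹ • x, ?_, rfl⟩
        simp [norm_smul, inv_mul_cancel₀ (norm_ne_zero_iff.mpr hx0),
          abs_of_nonneg (inv_nonneg.mpr (norm_nonneg x))]
      have hle := le_csSup hbdd hmem
      have hval : ⟪S (‖x‖⁻¹ • x), ‖x‖⁻¹ • x⟫ = ‖x‖⁻¹ * ‖x‖⁻¹ * ⟪S x, x⟫ := by
        rw [_root_.map_smul]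
        simp [real_inner_smul_left, real_inner_smul_right]; ring
      rw [hval] at hle
      have hxpos : 0 < ‖x‖ := norm_pos_iff.mpr hx0
      have : ⟪S x, x⟫ = ‖x‖ ^ 2 * (‖x‖⁻¹ * ‖x‖⁻¹ * ⟪S x, x⟫) := by
        field_simp
      rw [this]
      have h2 : (0:ℝ) < ‖x‖ ^ 2 := by positivity
      calc ‖x‖ ^ 2 * (‖x‖⁻¹ * ‖x‖⁻¹ * ⟪S x, x⟫) ≤ ‖x‖ ^ 2 * M := by
            exact mul_le_mul_of_nonneg_left hle (le_of_lt h2)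
      _ = M * ‖x‖ ^ 2 := by ring
  set c : ℝ := ‖S‖ with hc
  have hc0 : 0 ≤ c := norm_nonneg _
  set S' : H →L[ℝ] H := S + c • ContinuousLinearMap.id ℝ H with hS'
  have hS'app : ∀ x : H, S' x = S x + c • x := fun x => rfl
  have hS'sym : ∀ x y : H, ⟪S' x, y⟫ = ⟪x, S' y⟫ := by
    intro x y
    simp only [hS'app, inner_add_left, inner_add_right, real_inner_smul_left,
      real_inner_smul_right, hSsym]
  have hS'form : ∀ x : H, ⟪S' x, x⟫ = ⟪S x, x⟫ + c * ‖x‖ ^ 2 := by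
    intro x
    rw [hS'app, inner_add_left, real_inner_smul_left, real_inner_self_eq_norm_sq]
  have hS'pos : ∀ x : H, 0 ≤ ⟪S' x, x⟫ := by
    intro x
    rw [hS'form]
    have h1 : |⟪S x, x⟫| ≤ ‖S x‖ * ‖x‖ := abs_real_inner_le_norm _ _
    have h2 := S.le_opNorm x
    have h3 : ‖S x‖ * ‖x‖ ≤ c * ‖x‖ ^ 2 := by nlinarith [norm_nonneg x]
    have := abs_le.mp h1
    nlinarith
  set μ : ℝ := M + c with hμ
  have hμpos : 0 < μ := by positivity
  have hS'bound : ∀ x : H, ⟪S' x, x⟫ ≤ μ * ‖x‖ ^ 2 := by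
    intro x
    rw [hS'form]
    have := hMbound x
    nlinarith [this]
  have hS'norm : ∀ x : H, ‖S' x‖ ≤ μ * ‖x‖ :=
    norm_le_of_form S' hS'sym hS'pos μ (le_of_lt hμpos) hS'bound
  -- choose δ
  set q : ℝ := M ^ 2 / (2 * (‖B‖ + M) + 1) with hq
  have hBM : (0:ℝ) < 2 * (‖B‖ + M) + 1 := by positivity
  have hq0 : 0 < q := by positivity
  set δ : ℝ := q ^ 2 / (4 * μ) with hδ
  have hδ0 : 0 < δ := by positivity
  -- pick a near-maximizer
  obtain ⟨t, ⟨x, hx1, rfl⟩, ht⟩ := exists_lt_of_lt_csSup hne (show M - δ < M by linarith)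
  have hx1' : ‖x‖ = 1 := Set.mem_setOf_eq.mp hx1
  set t := ⟪S x, x⟫ with htdef
  set e : H := S x - M • x with he
  have hee : e = S' x - μ • x := by
    rw [he, hS'app, hμ]
    module
  have henorm : ‖e‖ ^ 2 ≤ 2 * μ * δ := by
    have hexp : ‖S' x - μ • x‖ ^ 2 = ‖S' x‖ ^ 2 - 2 * (μ * ⟪S' x, x⟫) + μ ^ 2 * ‖x‖ ^ 2 := by
      rw [norm_sub_sq_real, real_inner_smul_right, norm_smul]
      simp [abs_of_nonneg (le_of_lt hμpos)]
      ring
    have h1 : ‖S' x‖ ^ 2 ≤ μ ^ 2 := by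
      have := hS'norm x
      rw [hx1'] at this
      nlinarith [norm_nonneg (S' x)]
    have h2 : ⟪S' x, x⟫ = t + c := by rw [hS'form, hx1']; ring
    have h3 : M - δ < t := ht
    rw [hee, hexp, h2, hx1']
    nlinarith [hμpos]
  -- the contradiction
  have hAx : A x = B x + M • x + e := by
    rw [he, hSapp]; module
  have hBx0 : 0 ≤ ⟪B x, x⟫ := hBpos x
  have hnx := hnorm x
  have hexp2 : ‖A x‖ ^ 2 = ‖B x‖ ^ 2 + 2 * ⟪B x, M • x + e⟫ + ‖M • x + e‖ ^ 2 := by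
    rw [hAx, add_assoc, norm_add_sq_real]
  have hBe : |⟪B x, e⟫| ≤ ‖B‖ * ‖e‖ := by
    calc |⟪B x, e⟫| ≤ ‖B x‖ * ‖e‖ := abs_real_inner_le_norm _ _
    _ ≤ ‖B‖ * ‖e‖ := by
        have := B.le_opNorm x
        rw [hx1'] at this
        nlinarith [norm_nonneg e, norm_nonneg (B x)]
  have hxe : |⟪x, e⟫| ≤ ‖e‖ := by
    have := abs_real_inner_le_norm x e
    rw [hx1'] at this; linarith
  have hMe : ‖M • x + e‖ ^ 2 = M ^ 2 + 2 * (M * ⟪x, e⟫) + ‖e‖ ^ 2 := by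
    rw [norm_add_sq_real, real_inner_smul_left, norm_smul, hx1']
    simp [abs_of_nonneg (le_of_lt hMpos)]
  have hBMxe : ⟪B x, M • x + e⟫ = M * ⟪B x, x⟫ + ⟪B x, e⟫ := by
    rw [inner_add_right, real_inner_smul_right]
  have hfinal : M ^ 2 ≤ 2 * (‖B‖ + M) * ‖e‖ := by
    have hsq : ‖A x‖ ^ 2 ≤ ‖B x‖ ^ 2 := by nlinarith [norm_nonneg (A x), norm_nonneg (B x)]
    rw [hexp2, hBMxe, hMe] at hsq
    have h1 := abs_le.mp hBe
    have h2 := abs_le.mp hxe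
    nlinarith [sq_nonneg ‖e‖, hMpos, hBx0]
  -- but ‖e‖ < q
  have heq : ‖e‖ < q := by
    have h1 : ‖e‖ ^ 2 ≤ 2 * μ * δ := henorm
    have h2 : 2 * μ * δ = q ^ 2 / 2 := by rw [hδ]; field_simp; ring
    have h3 : ‖e‖ ^ 2 < q ^ 2 := by rw [h2] at h1; nlinarith [hq0]
    nlinarith [norm_nonneg e, hq0]
  have : M ^ 2 < 2 * (‖B‖ + M) * q := by
    have hBnn : (0:ℝ) ≤ ‖B‖ := norm_nonneg _
    nlinarith [hfinal, heq, hMpos, norm_nonneg e]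
  have hBnn : (0:ℝ) ≤ ‖B‖ := norm_nonneg _
  have hP1 : (0:ℝ) < 2 * (‖B‖ + M) + 1 := hBM
  have hlt1 : 2 * (‖B‖ + M) / (2 * (‖B‖ + M) + 1) < 1 := (div_lt_one hP1).mpr (by linarith)
  have hrw : 2 * (‖B‖ + M) * q = 2 * (‖B‖ + M) / (2 * (‖B‖ + M) + 1) * M ^ 2 := by
    rw [hq]; field_simp
  rw [hrw] at this
  nlinarith [hMpos, hlt1, this, sq_nonneg M]

section Diag
variable (ψ : HilbertBasis ℕ ℝ H) (γ : ℕ → ℝ) (hγ0 : ∀ j, 0 ≤ γ j) (hγ1 : ∀ j, γ j ≤ 1)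
include hγ0 hγ1

lemma memlp_mul (f : lp (fun _ : ℕ => ℝ) 2) :
    Memℓp (fun j => γ j * f j) 2 := by
  apply memℓp_gen
  have h2 : ((2:ℝ≥0∞)).toReal = 2 := by norm_num
  rw [h2]
  have hf : Summable (fun j => ‖f j‖ ^ (2:ℝ)) := (lp.memℓp f).summable (by norm_num)
  apply Summable.of_nonneg_of_le (fun j => by positivity) _ hf
  intro j
  have : ‖γ j * f j‖ ≤ ‖f j‖ := by
    rw [norm_mul]
    have : |γ j| ≤ 1 := by rw [abs_of_nonneg (hγ0 j)]; exact hγ1 j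
    calc ‖γ j‖ * ‖f j‖ ≤ 1 * ‖f j‖ := by
          apply mul_le_mul_of_nonneg_right _ (norm_nonneg _)
          simpa [Real.norm_eq_abs] using this
    _ = ‖f j‖ := one_mul _
  exact Real.rpow_le_rpow (norm_nonneg _) this (by norm_num)

/-- Multiplication by `γ` on `ℓ²`. -/
def lpMul (f : lp (fun _ : ℕ => ℝ) 2) : lp (fun _ : ℕ => ℝ) 2 :=
  ⟨fun j => γ j * f j, memlp_mul γ hγ0 hγ1 f⟩

lemma lpMul_apply (f : lp (fun _ : ℕ => ℝ) 2) (j : ℕ) : (lpMul γ hγ0 hγ1 f) j = γ j * f j := rfl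

lemma lpMul_norm_le (f : lp (fun _ : ℕ => ℝ) 2) : ‖lpMul γ hγ0 hγ1 f‖ ≤ ‖f‖ := by
  have h2 : (0:ℝ) < ((2:ℝ≥0∞)).toReal := by norm_num
  apply lp.norm_le_of_tsum_le h2 (norm_nonneg f)
  have hrw : ∀ j, ‖(lpMul γ hγ0 hγ1 f) j‖ ^ ((2:ℝ≥0∞)).toReal ≤ ‖f j‖ ^ ((2:ℝ≥0∞)).toReal := by
    intro j
    apply Real.rpow_le_rpow (norm_nonneg _)
    · rw [lpMul_apply, norm_mul]
      have : ‖γ j‖ ≤ 1 := by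
        rw [Real.norm_eq_abs, abs_of_nonneg (hγ0 j)]; exact hγ1 j
      nlinarith [norm_nonneg (f j)]
    · norm_num
  calc ∑' j, ‖(lpMul γ hγ0 hγ1 f) j‖ ^ ((2:ℝ≥0∞)).toReal
      ≤ ∑' j, ‖f j‖ ^ ((2:ℝ≥0∞)).toReal := by
        apply Summable.tsum_le_tsum hrw
        · exact ((lp.memℓp _).summable h2)
        · exact ((lp.memℓp f).summable h2)
  _ = ‖f‖ ^ ((2:ℝ≥0∞)).toReal := (lp.norm_rpow_eq_tsum h2 f).symm

/-- The diagonal operator `h ↦ ∑ γ_j ⟨h,ψ_j⟩ ψ_j`. -/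
def Dop : H →L[ℝ] H :=
  LinearMap.mkContinuous
    { toFun := fun h => ψ.repr.symm (lpMul γ hγ0 hγ1 (ψ.repr h))
      map_add' := by
        intro a b
        have key : lpMul γ hγ0 hγ1 (ψ.repr (a + b))
            = lpMul γ hγ0 hγ1 (ψ.repr a) + lpMul γ hγ0 hγ1 (ψ.repr b) := by
          apply lp.ext
          funext j
          have h1 : (↑(lpMul γ hγ0 hγ1 (ψ.repr a) + lpMul γ hγ0 hγ1 (ψ.repr b)) :
              ∀ _ : ℕ, ℝ) j = (lpMul γ hγ0 hγ1 (ψ.repr a)) j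
                + (lpMul γ hγ0 hγ1 (ψ.repr b)) j := by
            rw [lp.coeFn_add]; rfl
          have h2 : (ψ.repr (a + b)) j = (ψ.repr a) j + (ψ.repr b) j := by
            rw [_root_.map_add, lp.coeFn_add]; rfl
          show γ j * (ψ.repr (a + b)) j = _
          rw [h1, h2]
          simp only [lpMul_apply]
          ring
        show ψ.repr.symm _ = ψ.repr.symm _ + ψ.repr.symm _
        rw [key, _root_.map_add]
      map_smul' := by
        intro c a
        have key : lpMul γ hγ0 hγ1 (ψ.repr (c • a))
            = c • lpMul γ hγ0 hγ1 (ψ.repr a) := by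
          apply lp.ext
          funext j
          have h1 : (↑(c • lpMul γ hγ0 hγ1 (ψ.repr a)) : ∀ _ : ℕ, ℝ) j
              = c * (lpMul γ hγ0 hγ1 (ψ.repr a)) j := by
            rw [lp.coeFn_smul]; rfl
          have h2 : (ψ.repr (c • a)) j = c * (ψ.repr a) j := by
            rw [_root_.map_smul, lp.coeFn_smul]; rfl
          show γ j * (ψ.repr (c • a)) j = _
          rw [h1, h2]
          simp only [lpMul_apply]
          ring
        show ψ.repr.symm _ = c • ψ.repr.symm _
        rw [key, _root_.map_smul] }
    1
    (by
      intro h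
      simp only [LinearMap.coe_mk, AddHom.coe_mk, one_mul]
      rw [LinearIsometryEquiv.norm_map]
      calc ‖lpMul γ hγ0 hγ1 (ψ.repr h)‖ ≤ ‖ψ.repr h‖ := lpMul_norm_le _ _ _ _
      _ = ‖h‖ := by rw [LinearIsometryEquiv.norm_map])

lemma Dop_apply (h : H) : Dop ψ γ hγ0 hγ1 h = ψ.repr.symm (lpMul γ hγ0 hγ1 (ψ.repr h)) := rfl

lemma Dop_inner (h h' : H) :
    ⟪Dop ψ γ hγ0 hγ1 h, h'⟫ = ∑' j, γ j * (⟪h, ψ j⟫ * ⟪h', ψ j⟫) := by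
  have heq : ⟪Dop ψ γ hγ0 hγ1 h, h'⟫
      = ⟪ψ.repr.symm (lpMul γ hγ0 hγ1 (ψ.repr h)), ψ.repr.symm (ψ.repr h')⟫ := by
    rw [Dop_apply, LinearIsometryEquiv.symm_apply_apply]
  rw [heq, LinearIsometryEquiv.inner_map_map, lp.inner_eq_tsum]
  congr 1
  funext j
  rw [RCLike.inner_apply, lpMul_apply, ψ.repr_apply_apply, ψ.repr_apply_apply]
  simp [real_inner_comm]
  ring

lemma Dop_norm_sq (h : H) :
    ‖Dop ψ γ hγ0 hγ1 h‖ ^ 2 = ∑' j, (γ j) ^ 2 * ⟪h, ψ j⟫ ^ 2 := by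
  have h1 : ‖Dop ψ γ hγ0 hγ1 h‖ ^ 2 = ⟪Dop ψ γ hγ0 hγ1 h, Dop ψ γ hγ0 hγ1 h⟫ :=
    (real_inner_self_eq_norm_sq _).symm
  have h2 : ⟪Dop ψ γ hγ0 hγ1 h, Dop ψ γ hγ0 hγ1 h⟫
      = ⟪lpMul γ hγ0 hγ1 (ψ.repr h), lpMul γ hγ0 hγ1 (ψ.repr h)⟫ := by
    rw [Dop_apply, LinearIsometryEquiv.inner_map_map]
  rw [h1, h2, lp.inner_eq_tsum]
  congr 1
  funext j
  rw [RCLike.inner_apply, lpMul_apply, ψ.repr_apply_apply]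
  simp [real_inner_comm]
  ring

end Diag

section Mat
variable (ψ : HilbertBasis ℕ ℝ H) (T : H →L[ℝ] H) {m : ℕ}

lemma ortho_fin (m : ℕ) : Orthonormal ℝ (fun j : Fin m => ψ (j : ℕ)) :=
  ψ.orthonormal.comp _ Fin.val_injective

lemma inner_basis_sum (x : Fin m → ℝ) (j : Fin m) :
    ⟪ψ (j : ℕ), ∑ k : Fin m, x k • ψ (k : ℕ)⟫ = x j :=
  (ortho_fin ψ m).inner_right_fintype x j

lemma sum_basis_ne (x : Fin m → ℝ) (hx : x ≠ 0) : (∑ k : Fin m, x k • ψ (k : ℕ)) ≠ 0 := by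
  intro h0
  apply hx
  funext j
  have := inner_basis_sum ψ x j
  rw [h0, inner_zero_right] at this
  simp [← this]

lemma mulVec_opMat (x : Fin m → ℝ) (j : Fin m) :
    (opMat ψ T m *ᵥ x) j = ⟪ψ (j : ℕ), T (∑ k : Fin m, x k • ψ (k : ℕ))⟫ := by
  rw [Matrix.mulVec, dotProduct, _root_.map_sum, inner_sum]
  apply Finset.sum_congr rfl
  intro k _
  rw [_root_.map_smul, real_inner_smul_right, opMat]
  simp only [Matrix.of_apply]
  ring

lemma dot_opMat (x : Fin m → ℝ) :
    x ⬝ᵥ (opMat ψ T m *ᵥ x) = ⟪(∑ k : Fin m, x k • ψ (k : ℕ)),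
      T (∑ k : Fin m, x k • ψ (k : ℕ))⟫ := by
  rw [dotProduct]
  rw [sum_inner]
  congr 1
  funext j
  rw [mulVec_opMat, real_inner_smul_left]

lemma opMat_posDef (hsym : ∀ x y : H, ⟪T x, y⟫ = ⟪x, T y⟫)
    (hpos : ∀ h : H, h ≠ 0 → 0 < ⟪T h, h⟫) : (opMat ψ T m).PosDef := by
  rw [Matrix.posDef_iff_dotProduct_mulVec]
  constructor
  · show (opMat ψ T m)ᴴ = opMat ψ T m
    apply Matrix.ext
    intro j k
    simp only [Matrix.conjTranspose_apply, opMat, Matrix.of_apply, star_trivial]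
    rw [← hsym, real_inner_comm]
  · intro x hx
    rw [star_trivial, dot_opMat]
    have hne := sum_basis_ne ψ x hx
    have := hpos _ hne
    rw [real_inner_comm]
    exact this

lemma opMat_det_isUnit (hsym : ∀ x y : H, ⟪T x, y⟫ = ⟪x, T y⟫)
    (hpos : ∀ h : H, h ≠ 0 → 0 < ⟪T h, h⟫) : IsUnit (opMat ψ T m).det :=
  (opMat_posDef ψ T hsym hpos).det_pos.ne'.isUnit

variable (φ : H)

lemma galerkin_coef_ge {j : ℕ} (hj : m ≤ j) : ⟪galerkin ψ T φ m, ψ j⟫ = 0 := by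
  rw [galerkin, sum_inner]
  apply Finset.sum_eq_zero
  intro k _
  rw [real_inner_smul_left]
  have hk : (k : ℕ) ≠ j := by
    have := k.isLt; omega
  have := orthonormal_iff_ite.mp ψ.orthonormal (k : ℕ) j
  rw [this]
  simp [hk]

lemma galerkin_ortho (hsym : ∀ x y : H, ⟪T x, y⟫ = ⟪x, T y⟫)
    (hpos : ∀ h : H, h ≠ 0 → 0 < ⟪T h, h⟫) (j : Fin m) :
    ⟪T (φ - galerkin ψ T φ m), ψ (j : ℕ)⟫ = 0 := by
  rw [_root_.map_sub, inner_sub_left]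
  have h1 : ⟪T (galerkin ψ T φ m), ψ (j : ℕ)⟫ = ⟪ψ (j : ℕ), T (galerkin ψ T φ m)⟫ :=
    real_inner_comm _ _
  have h2 : ⟪ψ (j : ℕ), T (galerkin ψ T φ m)⟫ = (opMat ψ T m *ᵥ galCoef ψ T φ m) j :=
    (mulVec_opMat ψ T _ j).symm
  have h3 : opMat ψ T m *ᵥ galCoef ψ T φ m = gvec ψ T φ m := by
    rw [galCoef, Matrix.mulVec_mulVec, Matrix.mul_nonsing_inv _ (opMat_det_isUnit ψ T hsym hpos),
      Matrix.one_mulVec]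
  have h4 : gvec ψ T φ m j = ⟪T φ, ψ (j : ℕ)⟫ := rfl
  rw [h1, h2, h3, h4, sub_self]

end Mat

section Sums

lemma parseval_summable (ψ : HilbertBasis ℕ ℝ H) (x : H) :
    Summable (fun j => ⟪x, ψ j⟫ ^ 2) := by
  have := ψ.summable_inner_mul_inner x x
  refine this.congr (fun j => ?_)
  rw [real_inner_comm x (ψ j)]
  ring

lemma parseval_tsum (ψ : HilbertBasis ℕ ℝ H) (x : H) :
    ∑' j, ⟪x, ψ j⟫ ^ 2 = ‖x‖ ^ 2 := by
  have h := ψ.tsum_inner_mul_inner x x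
  rw [real_inner_self_eq_norm_sq] at h
  rw [← h]
  congr 1
  funext j
  rw [real_inner_comm x (ψ j)]
  ring

/-- Cauchy–Schwarz for infinite sums. -/
lemma tsum_CS (a b : ℕ → ℝ) (ha : Summable (fun j => a j ^ 2))
    (hb : Summable (fun j => b j ^ 2)) :
    (∑' j, a j * b j) ^ 2 ≤ (∑' j, a j ^ 2) * (∑' j, b j ^ 2) := by
  have hab : Summable (fun j => a j * b j) := by
    apply Summable.of_abs
    apply Summable.of_nonneg_of_le (fun j => abs_nonneg _)
      (fun j => ?_) (((ha.add hb).div_const 2))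
    rw [abs_mul]
    have := sq_nonneg (|a j| - |b j|)
    have h1 : |a j| ^ 2 = a j ^ 2 := sq_abs _
    have h2 : |b j| ^ 2 = b j ^ 2 := sq_abs _
    nlinarith
  have hA : (0:ℝ) ≤ ∑' j, a j ^ 2 := tsum_nonneg (fun j => sq_nonneg _)
  have hB : (0:ℝ) ≤ ∑' j, b j ^ 2 := tsum_nonneg (fun j => sq_nonneg _)
  have hfin : ∀ s : Finset ℕ, (∑ j ∈ s, a j * b j) ^ 2
      ≤ (∑' j, a j ^ 2) * (∑' j, b j ^ 2) := by
    intro s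
    calc (∑ j ∈ s, a j * b j) ^ 2 ≤ (∑ j ∈ s, a j ^ 2) * (∑ j ∈ s, b j ^ 2) :=
          Finset.sum_mul_sq_le_sq_mul_sq s a b
    _ ≤ (∑' j, a j ^ 2) * (∑' j, b j ^ 2) := by
        apply mul_le_mul
        · exact Summable.sum_le_tsum s (fun j _ => sq_nonneg _) ha
        · exact Summable.sum_le_tsum s (fun j _ => sq_nonneg _) hb
        · exact Finset.sum_nonneg (fun j _ => sq_nonneg _)
        · exact hA
  have htend : Filter.Tendsto (fun s : Finset ℕ => (∑ j ∈ s, a j * b j) ^ 2)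
      Filter.atTop (nhds ((∑' j, a j * b j) ^ 2)) := by
    exact ((continuous_pow 2).continuousAt.tendsto.comp hab.hasSum)
  exact le_of_tendsto htend (Filter.Eventually.of_forall hfin)

end Sums

lemma summable_ite (p : ℕ → Prop) [DecidablePred p] (f : ℕ → ℝ) (hf : Summable f) :
    Summable (fun j => if p j then f j else 0) := by
  have h := hf.indicator {j | p j}
  have he : Set.indicator {j | p j} f = (fun j => if p j then f j else 0) := by
    funext j
    simp [Set.indicator_apply, Set.mem_setOf_eq]
  rwa [he] at h

end AuxLemmas

set_option maxHeartbeats 2000000 in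
/-- Lemma B.1, (B.6): bias bound `|ℓ(φ − φ_m)|² ≤ 2r {tail + 2(1+d⁴)(γ_m/β_m)Σ}`. -/
theorem stmt_9 (ψ : HilbertBasis ℕ ℝ H) (γ : ℕ → ℝ) (d : ℝ) (hd : 1 ≤ d)
    (hγ1 : γ 0 = 1) (hγpos : ∀ j, 0 < γ j) (hγanti : Antitone γ)
    (hγ0 : Filter.Tendsto γ Filter.atTop (nhds 0)) (hγsum : Summable γ)
    (β : ℕ → ℝ) (hβ1 : β 0 = 1) (hβmono : Monotone β)
    (hβ0 : Filter.Tendsto (fun j => (β j)⁻¹) Filter.atTop (nhds 0)) (r : ℝ) (hr : 0 < r)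
    (lc : ℕ → ℝ) (hl1 : lc 0 = 1) (hlβ : Summable (fun j => lc j ^ 2 / β j))
    (T : H →L[ℝ] H) (hT : memG ψ γ d T)
    (φ : H) (hφ : memF ψ β r φ) :
    ∀ m : ℕ, 1 ≤ m →
      (ellOf ψ lc (φ - galerkin ψ T φ m)) ^ 2 ≤
        2 * r * ((∑' j, if m ≤ j then lc j ^ 2 / β j else 0)
          + 2 * (1 + d ^ 4) * (γ (m - 1) / β (m - 1)) *
              ∑ j ∈ Finset.range m, lc j ^ 2 / γ j) := by
  intro m hm
  classical
  -- positivity basics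
  have hd0 : (0:ℝ) < d := lt_of_lt_of_le one_pos hd
  have hβge1 : ∀ j, (1:ℝ) ≤ β j := by
    intro j; have := hβmono (Nat.zero_le j); rwa [hβ1] at this
  have hβpos : ∀ j, (0:ℝ) < β j := fun j => lt_of_lt_of_le one_pos (hβge1 j)
  have hγle1 : ∀ j, γ j ≤ 1 := by
    intro j; have := hγanti (Nat.zero_le j); rwa [hγ1] at this
  have hγ0' : ∀ j, (0:ℝ) ≤ γ j := fun j => (hγpos j).le
  obtain ⟨hsym, hpos, hnuc, hlink⟩ := hT
  have hpos0 : ∀ h : H, 0 ≤ ⟪T h, h⟫ := by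
    intro h
    rcases eq_or_ne h 0 with rfl | hne
    · simp
    · exact (hpos h hne).le
  set Gp : ℝ := γ (m - 1) with hGpdef
  set Bp : ℝ := β (m - 1) with hBpdef
  have hGp : 0 < Gp := hγpos _
  have hBp : 0 < Bp := hβpos _
  set Q : ℝ := r / Bp with hQdef
  have hQ0 : 0 < Q := div_pos hr hBp
  set u : H := φ - galerkin ψ T φ m with hu
  set w : H := φ - ∑ k : Fin m, ⟪φ, ψ (k : ℕ)⟫ • ψ (k : ℕ) with hw
  -- coordinates of finite sums
  have hcoord : ∀ (c : Fin m → ℝ) (j : ℕ),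
      ⟪∑ k : Fin m, c k • ψ (k : ℕ), ψ j⟫ = if h : j < m then c ⟨j, h⟩ else 0 := by
    intro c j
    by_cases h : j < m
    · rw [dif_pos h, real_inner_comm]
      exact inner_basis_sum ψ c ⟨j, h⟩
    · rw [dif_neg h, sum_inner]
      apply Finset.sum_eq_zero
      intro k _
      rw [real_inner_smul_left]
      have hk : (k : ℕ) ≠ j := by have := k.isLt; omega
      rw [orthonormal_iff_ite.mp ψ.orthonormal (k : ℕ) j]
      simp [hk]
  have hucge : ∀ j, m ≤ j → ⟪u, ψ j⟫ = ⟪φ, ψ j⟫ := by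
    intro j hj
    rw [hu, inner_sub_left, galerkin_coef_ge ψ T φ hj, sub_zero]
  have hwc : ∀ j, ⟪w, ψ j⟫ = if m ≤ j then ⟪φ, ψ j⟫ else 0 := by
    intro j
    rw [hw, inner_sub_left, hcoord]
    by_cases h : j < m
    · rw [dif_pos h, if_neg (by omega)]
      simp
    · rw [dif_neg h, if_pos (by omega), sub_zero]
  -- Galerkin orthogonality and the energy inequality
  have horthj : ∀ j : Fin m, ⟪T u, ψ (j : ℕ)⟫ = 0 := by
    intro j
    rw [hu]
    exact galerkin_ortho ψ T φ hsym hpos j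
  have hTuuw : ⟪T u, u⟫ = ⟪T u, w⟫ := by
    have huw : u - w = ∑ k : Fin m, (⟪φ, ψ (k : ℕ)⟫ - galCoef ψ T φ m k) • ψ (k : ℕ) := by
      rw [hu, hw, galerkin]
      simp only [sub_smul, Finset.sum_sub_distrib]
      abel
    have h0 : ⟪T u, u - w⟫ = 0 := by
      rw [huw, inner_sum]
      apply Finset.sum_eq_zero
      intro k _
      rw [real_inner_smul_right, horthj k, mul_zero]
    rw [inner_sub_right] at h0
    linarith
  have henergy1 : ⟪T u, u⟫ ≤ ⟪T w, w⟫ := by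
    have hcs := formCS T hsym hpos0 u w
    rw [← hTuuw] at hcs
    have hX := hpos0 u
    have hY := hpos0 w
    by_contra hcontra
    push_neg at hcontra
    nlinarith [hcs, hX, hY]
  -- summability facts
  have sφ2 := parseval_summable ψ φ
  have su2 := parseval_summable ψ u
  have sβφ : Summable (fun j => β j * ⟪φ, ψ j⟫ ^ 2) := hφ.1
  have sgal : Summable (fun j => β j * ⟪galerkin ψ T φ m, ψ j⟫ ^ 2) := by
    apply summable_of_ne_finset_zero (s := Finset.range m)
    intro j hj
    rw [galerkin_coef_ge ψ T φ (by simpa using hj)]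
    ring
  have hucsub : ∀ j, ⟪u, ψ j⟫ = ⟪φ, ψ j⟫ - ⟪galerkin ψ T φ m, ψ j⟫ := by
    intro j; rw [hu, inner_sub_left]
  have sβu : Summable (fun j => β j * ⟪u, ψ j⟫ ^ 2) := by
    apply Summable.of_nonneg_of_le
      (fun j => mul_nonneg (hβpos j).le (sq_nonneg _)) (fun j => ?_)
      ((sβφ.mul_left 2).add (sgal.mul_left 2))
    rw [hucsub j]
    have hb := (hβpos j).le
    nlinarith [sq_nonneg (⟪φ, ψ j⟫ + ⟪galerkin ψ T φ m, ψ j⟫), hb,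
      sq_nonneg (⟪φ, ψ j⟫ - ⟪galerkin ψ T φ m, ψ j⟫)]
  have sℓu : Summable (fun j => lc j * ⟪u, ψ j⟫) := by
    apply Summable.of_abs
    apply Summable.of_nonneg_of_le (fun j => abs_nonneg _) (fun j => ?_)
      ((hlβ.add sβu).div_const 2)
    have hB := hβpos j
    have h2 : (lc j ^ 2 / β j + β j * ⟪u, ψ j⟫ ^ 2) / 2
        = (lc j ^ 2 + β j ^ 2 * ⟪u, ψ j⟫ ^ 2) / (2 * β j) := by
      field_simp
    show |lc j * ⟪u, ψ j⟫| ≤ (lc j ^ 2 / β j + β j * ⟪u, ψ j⟫ ^ 2) / 2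
    rw [h2, le_div_iff₀ (by positivity), abs_mul]
    nlinarith [sq_nonneg (|lc j| - β j * |⟪u, ψ j⟫|), sq_abs (lc j), sq_abs ⟪u, ψ j⟫,
      abs_nonneg (lc j), abs_nonneg ⟪u, ψ j⟫, hB]
  have sγu : Summable (fun j => γ j * ⟪u, ψ j⟫ ^ 2) := by
    apply Summable.of_nonneg_of_le
      (fun j => mul_nonneg (hγ0' j) (sq_nonneg _)) (fun j => ?_) su2
    nlinarith [hγle1 j, sq_nonneg ⟪u, ψ j⟫, hγ0' j]
  -- tail bounds
  have htail_base : ∑' j, (if m ≤ j then β j * ⟪φ, ψ j⟫ ^ 2 else 0) ≤ r := by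
    refine le_trans (Summable.tsum_le_tsum (fun j => ?_) (summable_ite _ _ sβφ) sβφ) hφ.2
    split
    · exact le_refl _
    · exact mul_nonneg (hβpos _).le (sq_nonneg _)
  have hwnorm2 : ‖w‖ ^ 2 ≤ Q := by
    rw [← parseval_tsum ψ w]
    have hle : ∀ j, ⟪w, ψ j⟫ ^ 2
        ≤ Bp⁻¹ * (if m ≤ j then β j * ⟪φ, ψ j⟫ ^ 2 else 0) := by
      intro j
      rw [hwc j]
      by_cases h : m ≤ j
      · rw [if_pos h, if_pos h]
        have h3 : Bp * ⟪φ, ψ j⟫ ^ 2 ≤ β j * ⟪φ, ψ j⟫ ^ 2 :=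
          mul_le_mul_of_nonneg_right (hβmono (by omega)) (sq_nonneg _)
        rw [inv_mul_eq_div, le_div_iff₀ hBp]
        linarith
      · rw [if_neg h, if_neg h]
        simp
    calc ∑' j, ⟪w, ψ j⟫ ^ 2
        ≤ ∑' j, Bp⁻¹ * (if m ≤ j then β j * ⟪φ, ψ j⟫ ^ 2 else 0) :=
          Summable.tsum_le_tsum hle (parseval_summable ψ w) ((summable_ite _ _ sβφ).mul_left _)
    _ = Bp⁻¹ * ∑' j, (if m ≤ j then β j * ⟪φ, ψ j⟫ ^ 2 else 0) := tsum_mul_left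
    _ ≤ Bp⁻¹ * r := mul_le_mul_of_nonneg_left htail_base (inv_nonneg.mpr hBp.le)
    _ = Q := by rw [hQdef, div_eq_inv_mul]
  have hγ2w : ∑' j, γ j ^ 2 * ⟪w, ψ j⟫ ^ 2 ≤ Gp ^ 2 * Q := by
    have hle : ∀ j, γ j ^ 2 * ⟪w, ψ j⟫ ^ 2
        ≤ (Gp ^ 2 * Bp⁻¹) * (if m ≤ j then β j * ⟪φ, ψ j⟫ ^ 2 else 0) := by
      intro j
      rw [hwc j]
      by_cases h : m ≤ j
      · rw [if_pos h, if_pos h]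
        have h1 : γ j ≤ Gp := hγanti (by omega)
        have h2 : Bp ≤ β j := hβmono (by omega)
        have heq : (Gp ^ 2 * Bp⁻¹) * (β j * ⟪φ, ψ j⟫ ^ 2)
            = Gp ^ 2 * (β j * ⟪φ, ψ j⟫ ^ 2) / Bp := by ring
        rw [heq, le_div_iff₀ hBp]
        have hγ2 : γ j ^ 2 ≤ Gp ^ 2 := by nlinarith [h1, hγ0' j]
        have c1 : γ j ^ 2 * ⟪φ, ψ j⟫ ^ 2 * Bp ≤ Gp ^ 2 * ⟪φ, ψ j⟫ ^ 2 * Bp := by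
          have := mul_le_mul_of_nonneg_right hγ2
            (mul_nonneg (sq_nonneg ⟪φ, ψ j⟫) hBp.le)
          nlinarith [this]
        have c2 : Gp ^ 2 * ⟪φ, ψ j⟫ ^ 2 * Bp ≤ Gp ^ 2 * ⟪φ, ψ j⟫ ^ 2 * β j :=
          mul_le_mul_of_nonneg_left h2 (by positivity)
        nlinarith [c1, c2]
      · rw [if_neg h, if_neg h]
        simp
    have hsmul : Summable (fun j => γ j ^ 2 * ⟪w, ψ j⟫ ^ 2) := by
      apply Summable.of_nonneg_of_le (fun j => by positivity) (fun j => ?_)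
        (parseval_summable ψ w)
      have hg2 : (0:ℝ) ≤ 1 - γ j ^ 2 := by nlinarith [hγle1 j, hγ0' j]
      nlinarith [mul_nonneg hg2 (sq_nonneg ⟪w, ψ j⟫)]
    calc ∑' j, γ j ^ 2 * ⟪w, ψ j⟫ ^ 2
        ≤ ∑' j, (Gp ^ 2 * Bp⁻¹) * (if m ≤ j then β j * ⟪φ, ψ j⟫ ^ 2 else 0) :=
          Summable.tsum_le_tsum hle hsmul ((summable_ite _ _ sβφ).mul_left _)
    _ = (Gp ^ 2 * Bp⁻¹) * ∑' j, (if m ≤ j then β j * ⟪φ, ψ j⟫ ^ 2 else 0) := tsum_mul_left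
    _ ≤ (Gp ^ 2 * Bp⁻¹) * r := mul_le_mul_of_nonneg_left htail_base (by positivity)
    _ = Gp ^ 2 * Q := by rw [hQdef]; ring
  have hTww : ⟪T w, w⟫ ≤ d * Gp * Q := by
    have h1 : ⟪T w, w⟫ ≤ ‖T w‖ * ‖w‖ := real_inner_le_norm _ _
    have h2 : ‖T w‖ ^ 2 ≤ d ^ 2 * (Gp ^ 2 * Q) :=
      le_trans (hlink w).2 (mul_le_mul_of_nonneg_left hγ2w (by positivity))
    have h3 : ‖w‖ ^ 2 ≤ Q := hwnorm2
    have h4 : (‖T w‖ * ‖w‖) ^ 2 ≤ (d * Gp * Q) ^ 2 := by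
      have h5 : ‖T w‖ ^ 2 * ‖w‖ ^ 2 ≤ (d ^ 2 * (Gp ^ 2 * Q)) * Q :=
        mul_le_mul h2 h3 (sq_nonneg _) (by positivity)
      nlinarith [h5]
    have h6 : (0:ℝ) ≤ ‖T w‖ * ‖w‖ := mul_nonneg (norm_nonneg _) (norm_nonneg _)
    have h7 : (0:ℝ) ≤ d * Gp * Q := by positivity
    nlinarith [h1, h4, h6, h7]
  -- Löwner–Heinz step
  set D : H →L[ℝ] H := Dop ψ γ hγ0' hγle1 with hD
  have hDsym : ∀ x y : H, ⟪D x, y⟫ = ⟪x, D y⟫ := by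
    intro x y
    calc ⟪D x, y⟫ = ∑' j, γ j * (⟪x, ψ j⟫ * ⟪y, ψ j⟫) := by
          rw [hD]; exact Dop_inner ψ γ hγ0' hγle1 x y
    _ = ∑' j, γ j * (⟪y, ψ j⟫ * ⟪x, ψ j⟫) := tsum_congr (fun j => by ring)
    _ = ⟪D y, x⟫ := by rw [hD]; exact (Dop_inner ψ γ hγ0' hγle1 y x).symm
    _ = ⟪x, D y⟫ := real_inner_comm _ _
  have hBsmulapp : ∀ h : H, (d • T) h = d • T h := fun h => rfl
  have hBsym : ∀ x y : H, ⟪(d • T) x, y⟫ = ⟪x, (d • T) y⟫ := by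
    intro x y
    rw [hBsmulapp, hBsmulapp, real_inner_smul_left, real_inner_smul_right, hsym]
  have hBpos2 : ∀ h : H, 0 ≤ ⟪(d • T) h, h⟫ := by
    intro h
    rw [hBsmulapp, real_inner_smul_left]
    exact mul_nonneg hd0.le (hpos0 h)
  have hABnorm : ∀ h : H, ‖D h‖ ≤ ‖(d • T) h‖ := by
    intro h
    have h1 := Dop_norm_sq ψ γ hγ0' hγle1 h
    have h2 := (hlink h).1
    have h3 : ∑' j, γ j ^ 2 * ⟪h, ψ j⟫ ^ 2 ≤ d ^ 2 * ‖T h‖ ^ 2 := by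
      rw [inv_mul_le_iff₀ (by positivity : (0:ℝ) < d ^ 2)] at h2
      exact h2
    have h4 : ‖(d • T) h‖ = d * ‖T h‖ := by
      rw [hBsmulapp, norm_smul, Real.norm_eq_abs, abs_of_pos hd0]
    have h5 : ‖D h‖ ^ 2 ≤ (d * ‖T h‖) ^ 2 := by
      rw [hD] at *
      rw [h1]
      nlinarith [h3]
    rw [h4]
    nlinarith [h5, norm_nonneg (D h), mul_nonneg hd0.le (norm_nonneg (T h))]
  have hLH := loewner_forms D (d • T) hDsym hBsym hBpos2 hABnorm u
  have hDu : ⟪D u, u⟫ = ∑' j, γ j * ⟪u, ψ j⟫ ^ 2 := by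
    rw [hD, Dop_inner]
    exact tsum_congr (fun j => by ring)
  have hdTu : ⟪(d • T) u, u⟫ = d * ⟪T u, u⟫ := by
    rw [hBsmulapp, real_inner_smul_left]
  have hmain2 : ∑' j, γ j * ⟪u, ψ j⟫ ^ 2 ≤ d ^ 2 * Gp * Q := by
    have c1 : ∑' j, γ j * ⟪u, ψ j⟫ ^ 2 ≤ d * ⟪T u, u⟫ := by
      rw [← hDu, ← hdTu]; exact hLH
    have c2 : d * ⟪T u, u⟫ ≤ d * ⟪T w, w⟫ :=
      mul_le_mul_of_nonneg_left henergy1 hd0.le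
    have c3 : d * ⟪T w, w⟫ ≤ d * (d * Gp * Q) :=
      mul_le_mul_of_nonneg_left hTww hd0.le
    calc ∑' j, γ j * ⟪u, ψ j⟫ ^ 2 ≤ d * ⟪T u, u⟫ := c1
    _ ≤ d * (d * Gp * Q) := le_trans c2 c3
    _ = d ^ 2 * Gp * Q := by ring
  -- the low-frequency part
  set V : ℝ := ∑ j ∈ Finset.range m, lc j ^ 2 / γ j with hVdef
  have hV0 : 0 ≤ V := Finset.sum_nonneg (fun j _ => div_nonneg (sq_nonneg _) (hγ0' j))
  set S2 : ℝ := ∑ j ∈ Finset.range m, lc j * ⟪u, ψ j⟫ with hS2def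
  have hS2sq : S2 ^ 2 ≤ V * (d ^ 2 * Gp * Q) := by
    have hcs := Finset.sum_mul_sq_le_sq_mul_sq (Finset.range m)
      (fun j => lc j / Real.sqrt (γ j)) (fun j => Real.sqrt (γ j) * ⟪u, ψ j⟫)
    have e1 : ∑ j ∈ Finset.range m,
        (lc j / Real.sqrt (γ j)) * (Real.sqrt (γ j) * ⟪u, ψ j⟫) = S2 := by
      rw [hS2def]
      apply Finset.sum_congr rfl
      intro j _
      have h0 : Real.sqrt (γ j) ≠ 0 := ne_of_gt (Real.sqrt_pos.mpr (hγpos j))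
      field_simp
    have e2 : ∑ j ∈ Finset.range m, (lc j / Real.sqrt (γ j)) ^ 2 = V := by
      rw [hVdef]
      apply Finset.sum_congr rfl
      intro j _
      rw [div_pow, Real.sq_sqrt (hγ0' j)]
    have e3 : ∑ j ∈ Finset.range m, (Real.sqrt (γ j) * ⟪u, ψ j⟫) ^ 2
        = ∑ j ∈ Finset.range m, γ j * ⟪u, ψ j⟫ ^ 2 := by
      apply Finset.sum_congr rfl
      intro j _
      rw [mul_pow, Real.sq_sqrt (hγ0' j)]
    rw [e1, e2, e3] at hcs
    have hrange : ∑ j ∈ Finset.range m, γ j * ⟪u, ψ j⟫ ^ 2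
        ≤ d ^ 2 * Gp * Q := by
      refine le_trans (Summable.sum_le_tsum (Finset.range m) (fun j _ => ?_) sγu) hmain2
      exact mul_nonneg (hγ0' j) (sq_nonneg _)
    exact le_trans hcs (mul_le_mul_of_nonneg_left hrange hV0)
  -- the high-frequency part
  set Tail : ℝ := ∑' j, (if m ≤ j then lc j ^ 2 / β j else 0) with hTaildef
  have hTail0 : 0 ≤ Tail := by
    apply tsum_nonneg
    intro j
    split
    · exact div_nonneg (sq_nonneg _) (hβpos _).le
    · exact le_refl _
  set a : ℕ → ℝ := fun j => if m ≤ j then lc j / Real.sqrt (β j) else 0 with ha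
  set b : ℕ → ℝ := fun j => if m ≤ j then Real.sqrt (β j) * ⟪u, ψ j⟫ else 0 with hb
  have hab : ∀ j, a j * b j = (if m ≤ j then lc j * ⟪u, ψ j⟫ else 0) := by
    intro j
    rw [ha, hb]
    by_cases h : m ≤ j
    · simp only [if_pos h]
      have h0 : Real.sqrt (β j) ≠ 0 := ne_of_gt (Real.sqrt_pos.mpr (hβpos j))
      field_simp
    · simp [if_neg h]
  have ha2 : ∀ j, a j ^ 2 = (if m ≤ j then lc j ^ 2 / β j else 0) := by
    intro j
    rw [ha]
    by_cases h : m ≤ j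
    · simp only [if_pos h]
      rw [div_pow, Real.sq_sqrt (hβpos j).le]
    · simp [if_neg h]
  have hb2 : ∀ j, b j ^ 2 = (if m ≤ j then β j * ⟪φ, ψ j⟫ ^ 2 else 0) := by
    intro j
    rw [hb]
    by_cases h : m ≤ j
    · simp only [if_pos h]
      rw [mul_pow, Real.sq_sqrt (hβpos j).le, hucge j h]
    · simp [if_neg h]
  have hsa : Summable (fun j => a j ^ 2) := by
    rw [show (fun j => a j ^ 2) = (fun j => if m ≤ j then lc j ^ 2 / β j else 0)
      from funext ha2]
    exact summable_ite _ _ hlβ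
  have hsb : Summable (fun j => b j ^ 2) := by
    rw [show (fun j => b j ^ 2) = (fun j => if m ≤ j then β j * ⟪φ, ψ j⟫ ^ 2 else 0)
      from funext hb2]
    exact summable_ite _ _ sβφ
  set S1 : ℝ := ∑' j, (if m ≤ j then lc j * ⟪u, ψ j⟫ else 0) with hS1def
  have hS1sq : S1 ^ 2 ≤ Tail * r := by
    have hcs := tsum_CS a b hsa hsb
    have e1 : ∑' j, a j * b j = S1 := tsum_congr hab
    have e2 : ∑' j, a j ^ 2 = Tail := tsum_congr ha2
    have e3 : ∑' j, b j ^ 2 ≤ r := by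
      rw [tsum_congr hb2]
      exact htail_base
    rw [e1, e2] at hcs
    calc S1 ^ 2 ≤ Tail * ∑' j, b j ^ 2 := hcs
    _ ≤ Tail * r := mul_le_mul_of_nonneg_left e3 hTail0
  -- splitting the functional
  have hsplit : ellOf ψ lc u = S2 + S1 := by
    have hell : ellOf ψ lc u = ∑' j, lc j * ⟪u, ψ j⟫ := rfl
    have h1 : ∀ j, lc j * ⟪u, ψ j⟫
        = (if j < m then lc j * ⟪u, ψ j⟫ else 0)
          + (if m ≤ j then lc j * ⟪u, ψ j⟫ else 0) := by
      intro j
      by_cases h : j < m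
      · rw [if_pos h, if_neg (by omega), add_zero]
      · rw [if_neg h, if_pos (by omega), zero_add]
    have hsum1 : Summable (fun j => if j < m then lc j * ⟪u, ψ j⟫ else 0) :=
      summable_of_ne_finset_zero (s := Finset.range m)
        (fun j hj => if_neg (by simpa using hj))
    have hsum2 : Summable (fun j => if m ≤ j then lc j * ⟪u, ψ j⟫ else 0) :=
      summable_ite _ _ sℓu
    rw [hell, tsum_congr h1, Summable.tsum_add hsum1 hsum2, hS1def, hS2def]
    congr 1
    rw [tsum_eq_sum (s := Finset.range m) (fun j hj => if_neg (by simpa using hj))]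
    apply Finset.sum_congr rfl
    intro j hj
    rw [if_pos (by simpa using hj)]
  -- final assembly
  have hd4 : d ^ 2 ≤ 2 * (1 + d ^ 4) := by nlinarith [sq_nonneg (d ^ 2 - 1)]
  have hP : (0:ℝ) ≤ V * Gp * (r / Bp) := by positivity
  have hkey : d ^ 2 * (V * Gp * (r / Bp)) ≤ 2 * (1 + d ^ 4) * (V * Gp * (r / Bp)) :=
    mul_le_mul_of_nonneg_right hd4 hP
  have hfinal1 : (ellOf ψ lc u) ^ 2 ≤ 2 * (V * (d ^ 2 * Gp * Q)) + 2 * (Tail * r) := by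
    rw [hsplit]
    nlinarith [hS2sq, hS1sq, sq_nonneg (S2 - S1)]
  calc (ellOf ψ lc u) ^ 2 ≤ 2 * (V * (d ^ 2 * Gp * Q)) + 2 * (Tail * r) := hfinal1
  _ = 2 * (d ^ 2 * (V * Gp * (r / Bp))) + 2 * (Tail * r) := by rw [hQdef]; ring
  _ ≤ 2 * (2 * (1 + d ^ 4) * (V * Gp * (r / Bp))) + 2 * (Tail * r) := by linarith
  _ = 2 * r * (Tail + 2 * (1 + d ^ 4) * (Gp / Bp) * V) := by
      field_simp
      ring


end
end

section
/- Let Γ ∈ G_γ^d under the Assumption, and set D := 4d³. Define V_m := max_{1≤k≤m} [ℓ]_k^t[Γ]_k^{−1}[ℓ]_k and V_m^γ := Σ_{j=1}^m [ℓ]_j²/γ_j. Then for all m ≥ 1: d^{−1} ≤ V_m/V_m^γ ≤ D; d^{−1} ≤ γ_m·‖[Γ]_m^{−1}‖ ≤ D; and d^{−1} ≤ γ_m·max_{1≤k≤m}‖[Γ]_k^{−1}‖ ≤ D, where ‖·‖ is the spectral norm. -/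
open scoped RealInnerProductSpace Classical ENNReal NNReal
open Matrix MeasureTheory

noncomputable section

variable {H : Type} [NormedAddCommGroup H] [InnerProductSpace ℝ H] [CompleteSpace H]

variable {Ω : Type}

section HeinzAux
/-- Cauchy–Schwarz for a psd symmetric bilinear form given by a matrix. -/
lemma psd_cauchy {N : ℕ} {M : Matrix (Fin N) (Fin N) ℝ}
    (hsym : ∀ v w : Fin N → ℝ, v ⬝ᵥ (M *ᵥ w) = w ⬝ᵥ (M *ᵥ v))
    (hpsd : ∀ v : Fin N → ℝ, 0 ≤ v ⬝ᵥ (M *ᵥ v)) (v w : Fin N → ℝ) :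
    (w ⬝ᵥ (M *ᵥ v)) ^ 2 ≤ (w ⬝ᵥ (M *ᵥ w)) * (v ⬝ᵥ (M *ᵥ v)) := by
  have key : ∀ t : ℝ, 0 ≤ (v ⬝ᵥ (M *ᵥ v)) * (t * t) + (2 * (w ⬝ᵥ (M *ᵥ v))) * t
      + (w ⬝ᵥ (M *ᵥ w)) := by
    intro t
    have h := hpsd (w + t • v)
    have hexp : (w + t • v) ⬝ᵥ (M *ᵥ (w + t • v)) =
        (v ⬝ᵥ (M *ᵥ v)) * (t * t) + (2 * (w ⬝ᵥ (M *ᵥ v))) * t + (w ⬝ᵥ (M *ᵥ w)) := by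
      rw [Matrix.mulVec_add, Matrix.mulVec_smul, add_dotProduct,
        smul_dotProduct, dotProduct_add, dotProduct_add, dotProduct_smul,
        dotProduct_smul, hsym v w]
      simp only [smul_eq_mul]
      ring
    rw [hexp] at h
    exact h
  have hd := discrim_le_zero key
  rw [discrim] at hd
  nlinarith [hd]

/-- Finite-dimensional Löwner–Heinz: if `‖Av‖ ≤ ‖Bv‖` for all `v`, with `A` symmetric and
`B` psd, then `A ≼ B` in the form order. -/
lemma heinz {N : ℕ} {A B : Matrix (Fin N) (Fin N) ℝ}
    (hA : A.IsHermitian) (hB : B.PosSemidef)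
    (h : ∀ v : Fin N → ℝ, (A *ᵥ v) ⬝ᵥ (A *ᵥ v) ≤ (B *ᵥ v) ⬝ᵥ (B *ᵥ v)) :
    ∀ v : Fin N → ℝ, v ⬝ᵥ (A *ᵥ v) ≤ v ⬝ᵥ (B *ᵥ v) := by
  have hC : (B - A).IsHermitian := hB.1.sub hA
  have hpsd : (B - A).PosSemidef := by
    refine hC.posSemidef_iff_eigenvalues_nonneg.mpr fun i => ?_
    by_contra hneg
    push_neg at hneg
    set μ := hC.eigenvalues i with hμ
    set v : Fin N → ℝ := ⇑(hC.eigenvectorBasis i) with hvdef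
    have hv : (B - A) *ᵥ v = μ • v := hC.mulVec_eigenvectorBasis i
    have hnorm : ‖hC.eigenvectorBasis i‖ = 1 := (hC.eigenvectorBasis).orthonormal.1 i
    have hvv : v ⬝ᵥ v = 1 := by
      rw [EuclideanSpace.norm_eq, Real.sqrt_eq_one] at hnorm
      have : ∀ j, ‖hC.eigenvectorBasis i j‖ ^ 2 = v j * v j := by
        intro j; rw [Real.norm_eq_abs, sq_abs, sq]
      calc v ⬝ᵥ v = ∑ j, v j * v j := rfl
        _ = ∑ j, ‖hC.eigenvectorBasis i j‖ ^ 2 := by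
            exact Finset.sum_congr rfl fun j _ => (this j).symm
        _ = 1 := hnorm
    have hv' : B *ᵥ v - A *ᵥ v = μ • v := by rw [← Matrix.sub_mulVec]; exact hv
    have hAv : A *ᵥ v = B *ᵥ v + (-μ) • v := by
      rw [neg_smul, ← sub_eq_add_neg, ← hv', sub_sub_cancel]
    have hq := h v
    have hBq : 0 ≤ v ⬝ᵥ (B *ᵥ v) := by
      have := (Matrix.posSemidef_iff_dotProduct_mulVec.mp hB).2 v
      simpa using this
    have hexp : (A *ᵥ v) ⬝ᵥ (A *ᵥ v) = (B *ᵥ v) ⬝ᵥ (B *ᵥ v)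
        + 2 * (-μ) * (v ⬝ᵥ (B *ᵥ v)) + μ * μ := by
      rw [hAv]
      rw [add_dotProduct, dotProduct_add, dotProduct_add, smul_dotProduct,
        smul_dotProduct, dotProduct_smul, dotProduct_smul, dotProduct_comm (B *ᵥ v) v]
      simp only [smul_eq_mul, hvv]
      ring
    rw [hexp] at hq
    have hneg' : μ < 0 := hneg
    nlinarith [hq, mul_pos_of_neg_of_neg hneg' hneg', mul_nonneg (neg_nonneg.mpr hneg'.le) hBq]
  intro v
  have h0 := (Matrix.posSemidef_iff_dotProduct_mulVec.mp hpsd).2 v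
  simp only [star_trivial, Matrix.sub_mulVec, dotProduct_sub] at h0
  linarith

lemma dot_expand {N : ℕ} (x y : Fin N → ℝ) (a b : ℝ) :
    (a • x + b • y) ⬝ᵥ (a • x + b • y) =
      a ^ 2 * (x ⬝ᵥ x) + 2 * a * b * (x ⬝ᵥ y) + b ^ 2 * (y ⬝ᵥ y) := by
  simp only [dotProduct, Pi.add_apply, Pi.smul_apply, smul_eq_mul, Finset.mul_sum]
  rw [← Finset.sum_add_distrib, ← Finset.sum_add_distrib]
  exact Finset.sum_congr rfl fun j _ => by ring

end HeinzAux
section AuxJS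

variable (ψ : HilbertBasis ℕ ℝ H)

/-- The element of `H` with coordinates `v` in the first `N` basis directions. -/
def vecH {N : ℕ} (v : Fin N → ℝ) : H := ∑ j : Fin N, v j • ψ (j : ℕ)

lemma inner_vecH_fin {N : ℕ} (v : Fin N → ℝ) (k : Fin N) :
    ⟪vecH ψ v, ψ (k : ℕ)⟫ = v k := by
  rw [vecH, sum_inner]
  have hite := orthonormal_iff_ite.mp ψ.orthonormal
  have : ∀ j : Fin N, ⟪v j • ψ (j : ℕ), ψ (k : ℕ)⟫ = if j = k then v j else 0 := by
    intro j
    rw [real_inner_smul_left, hite]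
    by_cases h : (j : ℕ) = k
    · have : j = k := Fin.ext h
      simp [this]
    · have : ¬ (j = k) := fun hh => h (by rw [hh])
      simp [h, this]
  rw [Finset.sum_congr rfl fun j _ => this j]
  simp

lemma inner_vecH_ge {N : ℕ} (v : Fin N → ℝ) (k : ℕ) (hk : N ≤ k) :
    ⟪vecH ψ v, ψ k⟫ = 0 := by
  rw [vecH, sum_inner]
  apply Finset.sum_eq_zero
  intro j _
  have hite := orthonormal_iff_ite.mp ψ.orthonormal
  rw [real_inner_smul_left, hite]
  have : ¬ ((j : ℕ) = k) := by omega
  simp [this]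

lemma hasSum_sq_inner (x : H) : HasSum (fun j => ⟪x, ψ j⟫ ^ 2) (‖x‖ ^ 2) := by
  have heq : (fun j => ⟪x, ψ j⟫ ^ 2) = fun j => ⟪x, ψ j⟫ * ⟪ψ j, x⟫ := by
    funext j; rw [sq, real_inner_comm x (ψ j)]
  rw [heq]
  have h := ψ.hasSum_inner_mul_inner x x
  rwa [real_inner_self_eq_norm_sq] at h

lemma sum_sq_inner_le (x : H) (s : Finset ℕ) : ∑ j ∈ s, ⟪x, ψ j⟫ ^ 2 ≤ ‖x‖ ^ 2 := by
  have h := hasSum_sq_inner ψ x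
  exact (Summable.sum_le_tsum s (fun _ _ => sq_nonneg _) h.summable).trans_eq h.tsum_eq

lemma normsq_vecH {N : ℕ} (v : Fin N → ℝ) : ‖vecH ψ v‖ ^ 2 = v ⬝ᵥ v := by
  have h := hasSum_sq_inner ψ (vecH ψ v)
  have ht := h.tsum_eq
  rw [tsum_eq_sum (s := Finset.range N)
    (fun k hk => by rw [inner_vecH_ge ψ v k (by simpa using hk)]; simp)] at ht
  rw [← ht, ← Fin.sum_univ_eq_sum_range (fun k => ⟪vecH ψ v, ψ k⟫ ^ 2) N]
  rw [dotProduct]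
  exact Finset.sum_congr rfl fun j _ => by rw [inner_vecH_fin ψ v j, sq]

end AuxJS
section AuxJS2
set_option linter.unusedSectionVars false

variable (ψ : HilbertBasis ℕ ℝ H) (Γ : H →L[ℝ] H)

lemma mulVec_opMat_s10 {N : ℕ} (v : Fin N → ℝ) (j : Fin N) :
    (opMat ψ Γ N *ᵥ v) j = ⟪ψ (j : ℕ), Γ (vecH ψ v)⟫ := by
  have : Γ (vecH ψ v) = ∑ k : Fin N, v k • Γ (ψ (k : ℕ)) := by
    rw [vecH, map_sum]
    exact Finset.sum_congr rfl fun k _ => by rw [ContinuousLinearMap.map_smul]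
  rw [this, inner_sum]
  rw [Matrix.mulVec, dotProduct]
  refine Finset.sum_congr rfl fun k _ => ?_
  rw [real_inner_smul_right]
  simp only [opMat, Matrix.of_apply]
  ring

lemma dot_opMat_s10 {N : ℕ} (w v : Fin N → ℝ) :
    w ⬝ᵥ (opMat ψ Γ N *ᵥ v) = ⟪vecH ψ w, Γ (vecH ψ v)⟫ := by
  rw [dotProduct, vecH, sum_inner]
  refine Finset.sum_congr rfl fun j _ => ?_
  rw [mulVec_opMat_s10 ψ Γ v j, real_inner_smul_left]

lemma opMat_symm_forms (hsa : ∀ x y : H, ⟪Γ x, y⟫ = ⟪x, Γ y⟫) {N : ℕ} (w v : Fin N → ℝ) :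
    w ⬝ᵥ (opMat ψ Γ N *ᵥ v) = v ⬝ᵥ (opMat ψ Γ N *ᵥ w) := by
  rw [dot_opMat_s10, dot_opMat_s10, ← hsa (vecH ψ w) (vecH ψ v), real_inner_comm]

lemma opMat_isHermitian (hsa : ∀ x y : H, ⟪Γ x, y⟫ = ⟪x, Γ y⟫) {N : ℕ} :
    (opMat ψ Γ N).IsHermitian := by
  have key : ∀ a b : ℕ, ⟪ψ a, Γ (ψ b)⟫ = ⟪ψ b, Γ (ψ a)⟫ := fun a b => by
    rw [← hsa (ψ a) (ψ b), real_inner_comm]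
  apply Matrix.ext
  intro j k
  rw [Matrix.conjTranspose_apply, star_trivial]
  exact key _ _

lemma norm_mulVec_opMat_le {N : ℕ} (v : Fin N → ℝ) :
    (opMat ψ Γ N *ᵥ v) ⬝ᵥ (opMat ψ Γ N *ᵥ v) ≤ ‖Γ (vecH ψ v)‖ ^ 2 := by
  rw [dotProduct]
  have h1 : ∀ j : Fin N, (opMat ψ Γ N *ᵥ v) j * (opMat ψ Γ N *ᵥ v) j
      = ⟪Γ (vecH ψ v), ψ (j : ℕ)⟫ ^ 2 := by
    intro j
    rw [mulVec_opMat_s10 ψ Γ v j, sq, real_inner_comm]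
  rw [Finset.sum_congr rfl fun j _ => h1 j,
    Fin.sum_univ_eq_sum_range (fun k => ⟪Γ (vecH ψ v), ψ k⟫ ^ 2) N]
  exact sum_sq_inner_le ψ _ _

end AuxJS2
section AuxJS3
set_option linter.unusedSectionVars false
set_option maxHeartbeats 1000000

variable (ψ : HilbertBasis ℕ ℝ H) (Γ : H →L[ℝ] H) (γ : ℕ → ℝ) (d : ℝ)

lemma inner_sq_le (x y : H) : ⟪x, y⟫ ^ 2 ≤ ‖x‖ ^ 2 * ‖y‖ ^ 2 := by
  calc ⟪x, y⟫ ^ 2 = |⟪x, y⟫| ^ 2 := (sq_abs _).symm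
    _ ≤ (‖x‖ * ‖y‖) ^ 2 := pow_le_pow_left₀ (abs_nonneg _) (abs_real_inner_le_norm x y) 2
    _ = ‖x‖ ^ 2 * ‖y‖ ^ 2 := mul_pow _ _ 2

lemma summable_sq_gamma (hγ1 : γ 0 = 1) (hγpos : ∀ j, 0 < γ j) (hγanti : Antitone γ)
    (hγsum : Summable γ) : Summable (fun j => γ j ^ 2) := by
  refine Summable.of_nonneg_of_le (fun j => sq_nonneg _) (fun j => ?_) hγsum
  have h1 : γ j ≤ 1 := by rw [← hγ1]; exact hγanti (Nat.zero_le j)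
  nlinarith [hγpos j]

lemma tsum_weight {N : ℕ} (v : Fin N → ℝ) :
    ∑' j, γ j ^ 2 * ⟪vecH ψ v, ψ j⟫ ^ 2 = ∑ j : Fin N, γ (j : ℕ) ^ 2 * v j ^ 2 := by
  rw [tsum_eq_sum (s := Finset.range N)
    (fun k hk => by rw [inner_vecH_ge ψ v k (by simpa using hk)]; simp)]
  rw [← Fin.sum_univ_eq_sum_range (fun k => γ k ^ 2 * ⟪vecH ψ v, ψ k⟫ ^ 2) N]
  exact Finset.sum_congr rfl fun j _ => by rw [inner_vecH_fin ψ v j]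

lemma norm_G_le (hΓ : memG ψ γ d Γ) {N : ℕ} (v : Fin N → ℝ) :
    ‖Γ (vecH ψ v)‖ ^ 2 ≤ d ^ 2 * ∑ j : Fin N, γ (j : ℕ) ^ 2 * v j ^ 2 := by
  have h := (hΓ.2.2.2 (vecH ψ v)).2
  rwa [tsum_weight ψ γ v] at h

lemma norm_G_ge (hΓ : memG ψ γ d Γ) {N : ℕ} (v : Fin N → ℝ) :
    (d ^ 2)⁻¹ * ∑ j : Fin N, γ (j : ℕ) ^ 2 * v j ^ 2 ≤ ‖Γ (vecH ψ v)‖ ^ 2 := by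
  have h := (hΓ.2.2.2 (vecH ψ v)).1
  rwa [tsum_weight ψ γ v] at h

lemma norm_Gpsi_le (hΓ : memG ψ γ d Γ) (hd : 1 ≤ d) (hγpos : ∀ j, 0 < γ j) (k : ℕ) :
    ‖Γ (ψ k)‖ ≤ d * γ k := by
  have h := (hΓ.2.2.2 (ψ k)).2
  have hite := orthonormal_iff_ite.mp ψ.orthonormal
  have ht : ∑' j, γ j ^ 2 * ⟪ψ k, ψ j⟫ ^ 2 = γ k ^ 2 := by
    rw [tsum_eq_single k (fun b hb => by rw [hite]; simp [Ne.symm hb])]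
    rw [hite]; simp
  rw [ht] at h
  have hdg : 0 ≤ d * γ k := mul_nonneg (by linarith) (hγpos k).le
  nlinarith [norm_nonneg (Γ (ψ k))]

lemma opMat_quad_eq (hΓ : memG ψ γ d Γ) {N : ℕ} (v : Fin N → ℝ) :
    v ⬝ᵥ (opMat ψ Γ N *ᵥ v) = ⟪Γ (vecH ψ v), vecH ψ v⟫ := by
  rw [dot_opMat_s10, real_inner_comm]

lemma opMat_quad_nonneg (hΓ : memG ψ γ d Γ) {N : ℕ} (v : Fin N → ℝ) :
    0 ≤ v ⬝ᵥ (opMat ψ Γ N *ᵥ v) := by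
  rw [opMat_quad_eq ψ Γ γ d hΓ]
  by_cases h : vecH ψ v = 0
  · simp [h]
  · exact (hΓ.2.1 _ h).le

lemma norm_G_split (hΓ : memG ψ γ d Γ) (hd : 1 ≤ d) (hγ1 : γ 0 = 1) (hγpos : ∀ j, 0 < γ j)
    (hγanti : Antitone γ) (hγsum : Summable γ) {N : ℕ} (v : Fin N → ℝ) :
    ‖Γ (vecH ψ v)‖ ^ 2 ≤ (opMat ψ Γ N *ᵥ v) ⬝ᵥ (opMat ψ Γ N *ᵥ v)
      + d ^ 2 * (∑' j, γ (j + N) ^ 2) * (v ⬝ᵥ v) := by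
  set x := Γ (vecH ψ v) with hx
  have hG := hasSum_sq_inner ψ x
  have hsplit := Summable.sum_add_tsum_nat_add (f := fun j => ⟪x, ψ j⟫ ^ 2) N hG.summable
  rw [hG.tsum_eq] at hsplit
  have hfirst : ∑ j ∈ Finset.range N, ⟪x, ψ j⟫ ^ 2
      = (opMat ψ Γ N *ᵥ v) ⬝ᵥ (opMat ψ Γ N *ᵥ v) := by
    rw [dotProduct, ← Fin.sum_univ_eq_sum_range (fun k => ⟪x, ψ k⟫ ^ 2) N]
    refine Finset.sum_congr rfl fun j _ => ?_
    rw [mulVec_opMat_s10 ψ Γ v j, ← hx, sq, real_inner_comm]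
  have hsg : Summable (fun j => γ (j + N) ^ 2) :=
    (summable_nat_add_iff N).mpr (summable_sq_gamma γ hγ1 hγpos hγanti hγsum)
  have htail : ∑' j, ⟪x, ψ (j + N)⟫ ^ 2 ≤ ∑' j, d ^ 2 * γ (j + N) ^ 2 * (v ⬝ᵥ v) := by
    refine Summable.tsum_le_tsum (fun j => ?_) ((summable_nat_add_iff N).mpr hG.summable)
      ((hsg.mul_left (d ^ 2)).mul_right (v ⬝ᵥ v))
    have h1 : ⟪x, ψ (j + N)⟫ = ⟪vecH ψ v, Γ (ψ (j + N))⟫ := hΓ.1 (vecH ψ v) (ψ (j + N))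
    rw [h1]
    have h2 := inner_sq_le (vecH ψ v) (Γ (ψ (j + N)))
    have h3 := norm_Gpsi_le ψ Γ γ d hΓ hd hγpos (j + N)
    have h4 : ‖Γ (ψ (j + N))‖ ^ 2 ≤ (d * γ (j + N)) ^ 2 :=
      pow_le_pow_left₀ (norm_nonneg _) h3 2
    have h5 : ‖vecH ψ v‖ ^ 2 = v ⬝ᵥ v := normsq_vecH ψ v
    calc ⟪vecH ψ v, Γ (ψ (j + N))⟫ ^ 2 ≤ ‖vecH ψ v‖ ^ 2 * ‖Γ (ψ (j + N))‖ ^ 2 := h2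
      _ ≤ (v ⬝ᵥ v) * (d * γ (j + N)) ^ 2 := by
          rw [h5]
          have hv2 : (0:ℝ) ≤ v ⬝ᵥ v := by rw [← h5]; positivity
          exact mul_le_mul_of_nonneg_left h4 hv2
      _ = d ^ 2 * γ (j + N) ^ 2 * (v ⬝ᵥ v) := by ring
  have htsum : ∑' j, d ^ 2 * γ (j + N) ^ 2 * (v ⬝ᵥ v)
      = d ^ 2 * (∑' j, γ (j + N) ^ 2) * (v ⬝ᵥ v) := by
    rw [tsum_mul_right, tsum_mul_left]
  rw [htsum] at htail
  calc ‖x‖ ^ 2 = ∑ j ∈ Finset.range N, ⟪x, ψ j⟫ ^ 2 + ∑' j, ⟪x, ψ (j + N)⟫ ^ 2 := hsplit.symm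
    _ ≤ _ := by rw [hfirst]; linarith

end AuxJS3
section AuxJS4
set_option linter.unusedSectionVars false
set_option maxHeartbeats 1000000

variable (ψ : HilbertBasis ℕ ℝ H) (Γ : H →L[ℝ] H) (γ : ℕ → ℝ) (d : ℝ)

lemma form_upper (hΓ : memG ψ γ d Γ) (hd : 1 ≤ d) (hγpos : ∀ j, 0 < γ j)
    {m : ℕ} (v : Fin m → ℝ) :
    v ⬝ᵥ (opMat ψ Γ m *ᵥ v) ≤ d * ∑ j : Fin m, γ (j : ℕ) * v j ^ 2 := by
  set B : Matrix (Fin m) (Fin m) ℝ := Matrix.diagonal (fun j : Fin m => d * γ (j : ℕ)) with hB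
  have hBpsd : B.PosSemidef := Matrix.PosSemidef.diagonal
    (fun j => mul_nonneg (by linarith) (hγpos _).le)
  have hkey : ∀ w : Fin m → ℝ, (opMat ψ Γ m *ᵥ w) ⬝ᵥ (opMat ψ Γ m *ᵥ w)
      ≤ (B *ᵥ w) ⬝ᵥ (B *ᵥ w) := by
    intro w
    have h1 := norm_mulVec_opMat_le ψ Γ w
    have h2 := norm_G_le ψ Γ γ d hΓ w
    have h3 : (B *ᵥ w) ⬝ᵥ (B *ᵥ w) = d ^ 2 * ∑ j : Fin m, γ (j : ℕ) ^ 2 * w j ^ 2 := by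
      rw [dotProduct, Finset.mul_sum]
      refine Finset.sum_congr rfl fun j _ => ?_
      rw [hB, Matrix.mulVec_diagonal]
      ring
    rw [h3]
    linarith
  have := heinz (opMat_isHermitian ψ Γ hΓ.1) hBpsd hkey v
  calc v ⬝ᵥ (opMat ψ Γ m *ᵥ v) ≤ v ⬝ᵥ (B *ᵥ v) := this
    _ = d * ∑ j : Fin m, γ (j : ℕ) * v j ^ 2 := by
        rw [dotProduct, Finset.mul_sum]
        refine Finset.sum_congr rfl fun j _ => ?_
        rw [hB, Matrix.mulVec_diagonal]
        ring

lemma approx_lower (hΓ : memG ψ γ d Γ) (hd : 1 ≤ d) (hγ1 : γ 0 = 1) (hγpos : ∀ j, 0 < γ j)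
    (hγanti : Antitone γ) (hγsum : Summable γ) (N : ℕ) (w : Fin N → ℝ) :
    ∑ j : Fin N, γ (j : ℕ) * w j ^ 2 ≤ d * (w ⬝ᵥ (opMat ψ Γ N *ᵥ w))
      + (d * (d * Real.sqrt (∑' j, γ (j + N) ^ 2))) * (w ⬝ᵥ w) := by
  set r : ℝ := ∑' j, γ (j + N) ^ 2 with hr
  have hrnn : 0 ≤ r := tsum_nonneg fun j => sq_nonneg _
  set δ : ℝ := d * Real.sqrt r with hδ
  have hδnn : 0 ≤ δ := mul_nonneg (by linarith) (Real.sqrt_nonneg _)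
  set A : Matrix (Fin N) (Fin N) ℝ := Matrix.diagonal (fun j : Fin N => γ (j : ℕ)) with hA
  set B : Matrix (Fin N) (Fin N) ℝ := d • opMat ψ Γ N
    + Matrix.diagonal (fun _ : Fin N => d * δ) with hB
  have hAherm : A.IsHermitian := Matrix.isHermitian_diagonal _
  have hBv : ∀ u : Fin N → ℝ, B *ᵥ u = d • (opMat ψ Γ N *ᵥ u) + (d * δ) • u := by
    intro u
    rw [hB, Matrix.add_mulVec, Matrix.smul_mulVec]
    congr 1
    ext j
    rw [Matrix.mulVec_diagonal]
    simp [mul_comm]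
  have hBpsd : B.PosSemidef := by
    refine Matrix.posSemidef_iff_dotProduct_mulVec.mpr ⟨?_, ?_⟩
    · exact Matrix.IsHermitian.add
        (by
          have hM := opMat_isHermitian ψ Γ hΓ.1 (N := N)
          rw [Matrix.IsHermitian] at hM ⊢
          rw [Matrix.conjTranspose_smul, hM]
          simp [star_trivial])
        (Matrix.isHermitian_diagonal _)
    · intro u
      have hstar : star u = u := by ext j; simp
      rw [hstar, hBv u, dotProduct_add, dotProduct_smul, dotProduct_smul]
      have h1 := opMat_quad_nonneg ψ Γ γ d hΓ u
      have h2 : 0 ≤ u ⬝ᵥ u := by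
        rw [dotProduct]
        exact Finset.sum_nonneg fun j _ => mul_self_nonneg _
      have hd0 : (0:ℝ) ≤ d := by linarith
      simp only [smul_eq_mul]
      exact add_nonneg (mul_nonneg hd0 h1) (mul_nonneg (mul_nonneg hd0 hδnn) h2)
  have hkey : ∀ u : Fin N → ℝ, (A *ᵥ u) ⬝ᵥ (A *ᵥ u) ≤ (B *ᵥ u) ⬝ᵥ (B *ᵥ u) := by
    intro u
    have hAu : (A *ᵥ u) ⬝ᵥ (A *ᵥ u) = ∑ j : Fin N, γ (j : ℕ) ^ 2 * u j ^ 2 := by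
      rw [dotProduct]
      refine Finset.sum_congr rfl fun j _ => ?_
      rw [hA, Matrix.mulVec_diagonal]
      ring
    have hsplit := norm_G_split ψ Γ γ d hΓ hd hγ1 hγpos hγanti hγsum u
    have hge := norm_G_ge ψ Γ γ d hΓ u
    have hqnn := opMat_quad_nonneg ψ Γ γ d hΓ u
    have huu : 0 ≤ u ⬝ᵥ u := by
      rw [dotProduct]; exact Finset.sum_nonneg fun j _ => mul_self_nonneg _
    have hBu : (B *ᵥ u) ⬝ᵥ (B *ᵥ u) = d ^ 2 * ((opMat ψ Γ N *ᵥ u) ⬝ᵥ (opMat ψ Γ N *ᵥ u))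
        + 2 * d ^ 2 * δ * (u ⬝ᵥ (opMat ψ Γ N *ᵥ u)) + d ^ 2 * δ ^ 2 * (u ⬝ᵥ u) := by
      rw [hBv u, dot_expand]
      rw [dotProduct_comm ((opMat ψ Γ N *ᵥ u)) u]
      ring
    have hδsq : δ ^ 2 = d ^ 2 * r := by
      rw [hδ, mul_pow, Real.sq_sqrt hrnn]
    have hd2pos : (0:ℝ) < d ^ 2 := by nlinarith
    have hge' : ∑ j : Fin N, γ (j : ℕ) ^ 2 * u j ^ 2 ≤ d ^ 2 * ‖Γ (vecH ψ u)‖ ^ 2 := by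
      have h := mul_le_mul_of_nonneg_left hge hd2pos.le
      rwa [← mul_assoc, mul_inv_cancel₀ hd2pos.ne', one_mul] at h
    have hsplit' := mul_le_mul_of_nonneg_left hsplit hd2pos.le
    have hcross : 0 ≤ 2 * d ^ 2 * δ * (u ⬝ᵥ (opMat ψ Γ N *ᵥ u)) := by
      have : (0:ℝ) ≤ 2 * d ^ 2 * δ := by positivity
      exact mul_nonneg this hqnn
    rw [hAu, hBu, hδsq]
    nlinarith [hge', hsplit', hcross, huu, hrnn]
  have hmain := heinz hAherm hBpsd hkey w
  have hAw : w ⬝ᵥ (A *ᵥ w) = ∑ j : Fin N, γ (j : ℕ) * w j ^ 2 := by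
    rw [dotProduct]
    refine Finset.sum_congr rfl fun j _ => ?_
    rw [hA, Matrix.mulVec_diagonal]
    ring
  have hBw : w ⬝ᵥ (B *ᵥ w) = d * (w ⬝ᵥ (opMat ψ Γ N *ᵥ w)) + (d * δ) * (w ⬝ᵥ w) := by
    rw [hBv w, dotProduct_add, dotProduct_smul, dotProduct_smul]
    simp only [smul_eq_mul]
  rw [hAw, hBw] at hmain
  calc ∑ j : Fin N, γ (j : ℕ) * w j ^ 2
      ≤ d * (w ⬝ᵥ (opMat ψ Γ N *ᵥ w)) + (d * δ) * (w ⬝ᵥ w) := hmain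
    _ = d * (w ⬝ᵥ (opMat ψ Γ N *ᵥ w)) + (d * (d * Real.sqrt r)) * (w ⬝ᵥ w) := by
        rw [hδ]

end AuxJS4
section AuxJS5
set_option linter.unusedSectionVars false
set_option maxHeartbeats 1000000

variable (ψ : HilbertBasis ℕ ℝ H) (Γ : H →L[ℝ] H) (γ : ℕ → ℝ) (d : ℝ)

/-- Extension of a vector by zeros. -/
def extVec (m N : ℕ) (v : Fin m → ℝ) : Fin N → ℝ :=
  fun j => if h : (j : ℕ) < m then v ⟨(j : ℕ), h⟩ else 0

lemma extVec_sum {M' : Type} [AddCommMonoid M'] {m N : ℕ} (hmN : m ≤ N) (v : Fin m → ℝ)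
    (g : ℕ → ℝ → M') (hg : ∀ k, g k 0 = 0) :
    ∑ j : Fin N, g (j : ℕ) (extVec m N v j) = ∑ j : Fin m, g (j : ℕ) (v j) := by
  set F : ℕ → M' := fun k => g k (if h : k < m then v ⟨k, h⟩ else 0) with hF
  have e1 : ∑ j : Fin N, g (j : ℕ) (extVec m N v j) = ∑ k ∈ Finset.range N, F k := by
    rw [← Fin.sum_univ_eq_sum_range F N]
    exact Finset.sum_congr rfl fun j _ => rfl
  have e2 : ∑ j : Fin m, g (j : ℕ) (v j) = ∑ k ∈ Finset.range m, F k := by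
    rw [← Fin.sum_univ_eq_sum_range F m]
    refine Finset.sum_congr rfl fun j _ => ?_
    rw [hF]
    simp only [j.isLt, dif_pos, Fin.eta]
  have e3 : ∑ k ∈ Finset.range m, F k = ∑ k ∈ Finset.range N, F k := by
    refine Finset.sum_subset (Finset.range_subset_range.mpr hmN) fun x _ hx => ?_
    have hxm : ¬ x < m := by simpa using hx
    rw [hF]
    simp only [hxm, dif_neg]
    exact hg x
  rw [e1, e2, e3]

lemma vecH_extVec {m N : ℕ} (hmN : m ≤ N) (v : Fin m → ℝ) :
    vecH ψ (extVec m N v) = vecH ψ v := by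
  have := extVec_sum hmN v (fun k t => t • ψ k) (fun k => zero_smul ℝ (ψ k))
  exact this

lemma dot_extVec {m N : ℕ} (hmN : m ≤ N) (v : Fin m → ℝ) :
    extVec m N v ⬝ᵥ extVec m N v = v ⬝ᵥ v := by
  have := extVec_sum hmN v (fun _ t => t * t) (fun k => zero_mul 0)
  exact this

lemma wsum_extVec {m N : ℕ} (hmN : m ≤ N) (v : Fin m → ℝ) :
    ∑ j : Fin N, γ (j : ℕ) * extVec m N v j ^ 2 = ∑ j : Fin m, γ (j : ℕ) * v j ^ 2 := by
  exact extVec_sum hmN v (fun k t => γ k * t ^ 2) (fun k => by ring)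

lemma form_lower (hΓ : memG ψ γ d Γ) (hd : 1 ≤ d) (hγ1 : γ 0 = 1) (hγpos : ∀ j, 0 < γ j)
    (hγanti : Antitone γ) (hγsum : Summable γ) {m : ℕ} (v : Fin m → ℝ) :
    ∑ j : Fin m, γ (j : ℕ) * v j ^ 2 ≤ d * (v ⬝ᵥ (opMat ψ Γ m *ᵥ v)) := by
  have key : ∀ N, m ≤ N → ∑ j : Fin m, γ (j : ℕ) * v j ^ 2
      ≤ d * (v ⬝ᵥ (opMat ψ Γ m *ᵥ v))
        + (d * (d * Real.sqrt (∑' j, γ (j + N) ^ 2))) * (v ⬝ᵥ v) := by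
    intro N hmN
    have h := approx_lower ψ Γ γ d hΓ hd hγ1 hγpos hγanti hγsum N (extVec m N v)
    rw [wsum_extVec γ hmN v, dot_extVec hmN v] at h
    have hq : extVec m N v ⬝ᵥ (opMat ψ Γ N *ᵥ extVec m N v) = v ⬝ᵥ (opMat ψ Γ m *ᵥ v) := by
      rw [opMat_quad_eq ψ Γ γ d hΓ, opMat_quad_eq ψ Γ γ d hΓ, vecH_extVec ψ hmN v]
    rwa [hq] at h
  have T1 : Filter.Tendsto (fun N => ∑' j, γ (j + N) ^ 2) Filter.atTop (nhds 0) :=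
    tendsto_sum_nat_add (f := fun k => γ k ^ 2)
  have Tsq : Filter.Tendsto (fun N => Real.sqrt (∑' j, γ (j + N) ^ 2))
      Filter.atTop (nhds 0) := by
    have := (Real.continuous_sqrt.tendsto 0).comp T1
    simpa [Real.sqrt_zero, Function.comp_def] using this
  have T3 : Filter.Tendsto (fun N => d * (v ⬝ᵥ (opMat ψ Γ m *ᵥ v))
      + (d * (d * Real.sqrt (∑' j, γ (j + N) ^ 2))) * (v ⬝ᵥ v)) Filter.atTop
      (nhds (d * (v ⬝ᵥ (opMat ψ Γ m *ᵥ v)))) := by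
    have h := (((Tsq.const_mul d).const_mul d).mul_const (v ⬝ᵥ v)).const_add
      (d * (v ⬝ᵥ (opMat ψ Γ m *ᵥ v)))
    simpa using h
  exact ge_of_tendsto T3 (Filter.eventually_atTop.mpr ⟨m, key⟩)

end AuxJS5
section AuxJS6
set_option linter.unusedSectionVars false
set_option maxHeartbeats 1000000

variable (ψ : HilbertBasis ℕ ℝ H) (Γ : H →L[ℝ] H) (γ : ℕ → ℝ) (d : ℝ)

lemma dot_self_nonneg {m : ℕ} (u : Fin m → ℝ) : 0 ≤ u ⬝ᵥ u :=
  Finset.sum_nonneg fun j _ => mul_self_nonneg _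

lemma vecH_ne_zero {m : ℕ} {v : Fin m → ℝ} (hv : v ≠ 0) : vecH ψ v ≠ 0 := by
  intro h0
  apply hv
  ext j
  have := inner_vecH_fin ψ v j
  rw [h0] at this
  simp only [inner_zero_left] at this
  exact this.symm

lemma opMat_posDef_s10 (hΓ : memG ψ γ d Γ) {m : ℕ} : (opMat ψ Γ m).PosDef := by
  refine Matrix.posDef_iff_dotProduct_mulVec.mpr ⟨opMat_isHermitian ψ Γ hΓ.1, fun v hv => ?_⟩
  have hstar : star v = v := by ext j; simp
  rw [hstar, opMat_quad_eq ψ Γ γ d hΓ]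
  exact hΓ.2.1 _ (vecH_ne_zero ψ hv)

lemma opMat_det_isUnit_s10 (hΓ : memG ψ γ d Γ) {m : ℕ} : IsUnit (opMat ψ Γ m).det :=
  (opMat_posDef_s10 ψ Γ γ d hΓ).det_pos.ne'.isUnit

lemma opMat_mulVec_inv (hΓ : memG ψ γ d Γ) {m : ℕ} (u : Fin m → ℝ) :
    opMat ψ Γ m *ᵥ ((opMat ψ Γ m)⁻¹ *ᵥ u) = u := by
  rw [Matrix.mulVec_mulVec, Matrix.mul_nonsing_inv _ (opMat_det_isUnit_s10 ψ Γ γ d hΓ),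
    Matrix.one_mulVec]

lemma opMat_inv_mulVec (hΓ : memG ψ γ d Γ) {m : ℕ} (u : Fin m → ℝ) :
    (opMat ψ Γ m)⁻¹ *ᵥ (opMat ψ Γ m *ᵥ u) = u := by
  rw [Matrix.mulVec_mulVec, Matrix.nonsing_inv_mul _ (opMat_det_isUnit_s10 ψ Γ γ d hΓ),
    Matrix.one_mulVec]

lemma euclid_normsq {m : ℕ} (x : EuclideanSpace ℝ (Fin m)) :
    ‖x‖ ^ 2 = (fun j => x j) ⬝ᵥ (fun j => x j) := by
  rw [EuclideanSpace.norm_eq, Real.sq_sqrt (by positivity)]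
  rw [dotProduct]
  exact Finset.sum_congr rfl fun j _ => by
    rw [Real.norm_eq_abs, sq_abs, sq]

lemma clm_apply {m : ℕ} (A : Matrix (Fin m) (Fin m) ℝ) (x : EuclideanSpace ℝ (Fin m)) (j : Fin m) :
    (Matrix.toEuclideanCLM (𝕜 := ℝ) A x) j = (A *ᵥ (fun i => x i)) j := by
  have h := congrFun (Matrix.ofLp_toEuclideanCLM (𝕜 := ℝ) A x) j
  simpa [Matrix.toLin'_apply] using h

lemma specNorm_le_of {m : ℕ} (A : Matrix (Fin m) (Fin m) ℝ) (c : ℝ) (hc : 0 ≤ c)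
    (h : ∀ u : Fin m → ℝ, (A *ᵥ u) ⬝ᵥ (A *ᵥ u) ≤ c ^ 2 * (u ⬝ᵥ u)) :
    specNorm A ≤ c := by
  rw [specNorm]
  refine ContinuousLinearMap.opNorm_le_bound _ hc fun x => ?_
  have h1 : ‖Matrix.toEuclideanCLM (𝕜 := ℝ) A x‖ ^ 2
      = (A *ᵥ (fun i => x i)) ⬝ᵥ (A *ᵥ (fun i => x i)) := by
    rw [euclid_normsq]
    rw [dotProduct, dotProduct]
    exact Finset.sum_congr rfl fun j _ => by rw [clm_apply]
  have h2 : ‖x‖ ^ 2 = (fun i => x i) ⬝ᵥ (fun i => x i) := euclid_normsq x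
  have h3 := h (fun i => x i)
  have h4 : ‖Matrix.toEuclideanCLM (𝕜 := ℝ) A x‖ ^ 2 ≤ (c * ‖x‖) ^ 2 := by
    rw [h1, mul_pow, h2]
    exact h3
  have h5 : 0 ≤ c * ‖x‖ := mul_nonneg hc (norm_nonneg _)
  nlinarith [norm_nonneg (Matrix.toEuclideanCLM (𝕜 := ℝ) A x)]

lemma specNorm_ge {m : ℕ} (A : Matrix (Fin m) (Fin m) ℝ) (u : Fin m → ℝ) :
    Real.sqrt ((A *ᵥ u) ⬝ᵥ (A *ᵥ u)) ≤ specNorm A * Real.sqrt (u ⬝ᵥ u) := by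
  set xu : EuclideanSpace ℝ (Fin m) := (WithLp.equiv 2 _).symm u with hxu
  have happ : Matrix.toEuclideanCLM (𝕜 := ℝ) A xu = (WithLp.equiv 2 _).symm (A *ᵥ u) := by
    rw [hxu]; rfl
  have hnorm : ∀ w : Fin m → ℝ, ‖(WithLp.equiv 2 ((i : Fin m) → ℝ)).symm w‖
      = Real.sqrt (w ⬝ᵥ w) := by
    intro w
    have := euclid_normsq ((WithLp.equiv 2 ((i : Fin m) → ℝ)).symm w)
    have hnn := norm_nonneg ((WithLp.equiv 2 ((i : Fin m) → ℝ)).symm w)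
    rw [← Real.sqrt_sq hnn, this]
    rfl
  have hle := (Matrix.toEuclideanCLM (𝕜 := ℝ) A).le_opNorm xu
  rw [happ] at hle
  rw [hnorm, hnorm] at hle
  exact hle.trans (le_of_eq rfl)

end AuxJS6
section AuxJS7
set_option linter.unusedSectionVars false
set_option maxHeartbeats 1000000

variable (ψ : HilbertBasis ℕ ℝ H) (Γ : H →L[ℝ] H) (γ : ℕ → ℝ) (d : ℝ)

lemma cs_weighted (hγpos : ∀ j, 0 < γ j) {k : ℕ} (v u : Fin k → ℝ) :
    (v ⬝ᵥ u) ^ 2 ≤ (∑ j : Fin k, γ (j : ℕ) * v j ^ 2) * (∑ j : Fin k, u j ^ 2 / γ (j : ℕ)) := by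
  have h := Finset.sum_mul_sq_le_sq_mul_sq Finset.univ
    (fun j : Fin k => Real.sqrt (γ (j : ℕ)) * v j) (fun j : Fin k => u j / Real.sqrt (γ (j : ℕ)))
  have h1 : ∀ j : Fin k, Real.sqrt (γ (j : ℕ)) * v j * (u j / Real.sqrt (γ (j : ℕ)))
      = v j * u j := by
    intro j
    have hs : Real.sqrt (γ (j : ℕ)) ≠ 0 := by
      rw [ne_eq, Real.sqrt_eq_zero (hγpos _).le]
      exact (hγpos _).ne'
    field_simp
  have h2 : ∀ j : Fin k, (Real.sqrt (γ (j : ℕ)) * v j) ^ 2 = γ (j : ℕ) * v j ^ 2 := by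
    intro j
    rw [mul_pow, Real.sq_sqrt (hγpos _).le]
  have h3 : ∀ j : Fin k, (u j / Real.sqrt (γ (j : ℕ))) ^ 2 = u j ^ 2 / γ (j : ℕ) := by
    intro j
    rw [div_pow, Real.sq_sqrt (hγpos _).le]
  rw [Finset.sum_congr rfl fun j _ => h1 j, Finset.sum_congr rfl fun j _ => h2 j,
    Finset.sum_congr rfl fun j _ => h3 j] at h
  exact h

lemma ell_upper (hΓ : memG ψ γ d Γ) (hd : 1 ≤ d) (hγ1 : γ 0 = 1) (hγpos : ∀ j, 0 < γ j)
    (hγanti : Antitone γ) (hγsum : Summable γ) {k : ℕ} (u : Fin k → ℝ) :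
    u ⬝ᵥ ((opMat ψ Γ k)⁻¹ *ᵥ u) ≤ d * ∑ j : Fin k, u j ^ 2 / γ (j : ℕ) := by
  set v : Fin k → ℝ := (opMat ψ Γ k)⁻¹ *ᵥ u with hv
  have hMv : opMat ψ Γ k *ᵥ v = u := opMat_mulVec_inv ψ Γ γ d hΓ u
  have hq : u ⬝ᵥ v = v ⬝ᵥ (opMat ψ Γ k *ᵥ v) := by
    rw [hMv, dotProduct_comm]
  have hqnn : 0 ≤ u ⬝ᵥ v := by rw [hq]; exact opMat_quad_nonneg ψ Γ γ d hΓ v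
  have hVnn : 0 ≤ ∑ j : Fin k, u j ^ 2 / γ (j : ℕ) :=
    Finset.sum_nonneg fun j _ => div_nonneg (sq_nonneg _) (hγpos _).le
  have hcs := cs_weighted γ hγpos v u
  have hform := form_lower ψ Γ γ d hΓ hd hγ1 hγpos hγanti hγsum v
  rw [hMv] at hform
  have hvd : v ⬝ᵥ u = u ⬝ᵥ v := dotProduct_comm v u
  rw [hvd] at hcs hform
  -- hcs : (u⬝v)^2 ≤ (∑ γ v²) * Vγ ; hform : ∑ γ v² ≤ d * (u⬝v)
  by_cases h0 : u ⬝ᵥ v = 0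
  · rw [h0]
    positivity
  · have hqpos : 0 < u ⬝ᵥ v := lt_of_le_of_ne hqnn (Ne.symm h0)
    nlinarith [hcs, hform, hVnn, hqpos]

lemma ell_lower (hΓ : memG ψ γ d Γ) (hd : 1 ≤ d) (hγ1 : γ 0 = 1) (hγpos : ∀ j, 0 < γ j)
    (hγanti : Antitone γ) (hγsum : Summable γ) {k : ℕ} (u : Fin k → ℝ) :
    d⁻¹ * ∑ j : Fin k, u j ^ 2 / γ (j : ℕ) ≤ u ⬝ᵥ ((opMat ψ Γ k)⁻¹ *ᵥ u) := by
  have hd0 : (0:ℝ) < d := lt_of_lt_of_le one_pos hd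
  set v : Fin k → ℝ := (opMat ψ Γ k)⁻¹ *ᵥ u with hv
  have hMv : opMat ψ Γ k *ᵥ v = u := opMat_mulVec_inv ψ Γ γ d hΓ u
  set w : Fin k → ℝ := fun j => u j / γ (j : ℕ) with hw
  set Vg : ℝ := ∑ j : Fin k, u j ^ 2 / γ (j : ℕ) with hVg
  have hVnn : 0 ≤ Vg :=
    Finset.sum_nonneg fun j _ => div_nonneg (sq_nonneg _) (hγpos _).le
  have hq : u ⬝ᵥ v = v ⬝ᵥ (opMat ψ Γ k *ᵥ v) := by rw [hMv, dotProduct_comm]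
  have hqnn : 0 ≤ u ⬝ᵥ v := by rw [hq]; exact opMat_quad_nonneg ψ Γ γ d hΓ v
  have hwu : w ⬝ᵥ (opMat ψ Γ k *ᵥ v) = Vg := by
    rw [hMv, hVg, dotProduct]
    refine Finset.sum_congr rfl fun j _ => ?_
    rw [hw]
    field_simp
  have hcs := psd_cauchy (opMat_symm_forms ψ Γ hΓ.1) (opMat_quad_nonneg ψ Γ γ d hΓ) v w
  rw [hwu] at hcs
  have hup := form_upper ψ Γ γ d hΓ hd hγpos w
  have hws : ∑ j : Fin k, γ (j : ℕ) * w j ^ 2 = Vg := by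
    rw [hVg]
    refine Finset.sum_congr rfl fun j _ => ?_
    have hne : γ (j : ℕ) ≠ 0 := (hγpos _).ne'
    rw [hw, div_pow]
    field_simp [hne]
    try ring
  rw [hws] at hup
  -- hcs : Vg^2 ≤ (w⬝Mw) * (v⬝Mv), hup : w⬝Mw ≤ d*Vg
  have hqq : v ⬝ᵥ (opMat ψ Γ k *ᵥ v) = u ⬝ᵥ v := hq.symm
  rw [hqq] at hcs
  have hwMw : 0 ≤ w ⬝ᵥ (opMat ψ Γ k *ᵥ w) := opMat_quad_nonneg ψ Γ γ d hΓ w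
  by_cases h0 : Vg = 0
  · rw [h0]
    simpa using hqnn
  · have hVpos : 0 < Vg := lt_of_le_of_ne hVnn (Ne.symm h0)
    -- Vg^2 ≤ d*Vg*(u⬝v)  ⇒ Vg ≤ d*(u⬝v) ⇒ d⁻¹ Vg ≤ u⬝v
    have h1 : Vg ^ 2 ≤ d * Vg * (u ⬝ᵥ v) := by nlinarith [hcs, hup, hqnn]
    have h2 : Vg ≤ d * (u ⬝ᵥ v) := by nlinarith [h1, hVpos]
    rw [inv_eq_one_div]
    rw [div_mul_eq_mul_div, div_le_iff₀ hd0]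
    nlinarith [h2]

end AuxJS7
section AuxJS8
set_option linter.unusedSectionVars false
set_option maxHeartbeats 1000000

variable (ψ : HilbertBasis ℕ ℝ H) (Γ : H →L[ℝ] H) (γ : ℕ → ℝ) (d : ℝ)

lemma specNorm_nonneg {m : ℕ} (A : Matrix (Fin m) (Fin m) ℝ) : 0 ≤ specNorm A := by
  rw [specNorm]; exact norm_nonneg _

lemma spec_le (hΓ : memG ψ γ d Γ) (hd : 1 ≤ d) (hγ1 : γ 0 = 1) (hγpos : ∀ j, 0 < γ j)
    (hγanti : Antitone γ) (hγsum : Summable γ) (k : ℕ) (hk : 1 ≤ k) :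
    specNorm (opMat ψ Γ k)⁻¹ ≤ d / γ (k - 1) := by
  have hd0 : (0:ℝ) < d := lt_of_lt_of_le one_pos hd
  have hg0 : 0 < γ (k - 1) := hγpos _
  refine specNorm_le_of _ _ (div_nonneg hd0.le hg0.le) fun u => ?_
  set w : Fin k → ℝ := (opMat ψ Γ k)⁻¹ *ᵥ u with hwdef
  have hMw : opMat ψ Γ k *ᵥ w = u := opMat_mulVec_inv ψ Γ γ d hΓ u
  have h1 : γ (k - 1) * (w ⬝ᵥ w) ≤ ∑ j : Fin k, γ (j : ℕ) * w j ^ 2 := by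
    rw [dotProduct, Finset.mul_sum]
    refine Finset.sum_le_sum fun j _ => ?_
    have hle : γ (k - 1) ≤ γ (j : ℕ) := hγanti (by omega)
    have hw2 : 0 ≤ w j * w j := mul_self_nonneg _
    calc γ (k - 1) * (w j * w j) ≤ γ (j : ℕ) * (w j * w j) :=
          mul_le_mul_of_nonneg_right hle hw2
      _ = γ (j : ℕ) * w j ^ 2 := by ring
  have h2 := form_lower ψ Γ γ d hΓ hd hγ1 hγpos hγanti hγsum w
  rw [hMw] at h2
  have h5 : γ (k - 1) * (w ⬝ᵥ w) ≤ d * (w ⬝ᵥ u) := le_trans h1 h2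
  have h3 : (w ⬝ᵥ u) ^ 2 ≤ (w ⬝ᵥ w) * (u ⬝ᵥ u) := by
    have h := Finset.sum_mul_sq_le_sq_mul_sq Finset.univ w u
    have e1 : w ⬝ᵥ w = ∑ j : Fin k, w j ^ 2 :=
      Finset.sum_congr rfl fun j _ => (sq (w j)).symm
    have e2 : u ⬝ᵥ u = ∑ j : Fin k, u j ^ 2 :=
      Finset.sum_congr rfl fun j _ => (sq (u j)).symm
    rw [e1, e2]
    exact h
  have hww : 0 ≤ w ⬝ᵥ w := dot_self_nonneg w
  have huu : 0 ≤ u ⬝ᵥ u := dot_self_nonneg u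
  by_cases h0 : w ⬝ᵥ w = 0
  · rw [h0]
    positivity
  · have hwwpos : 0 < w ⬝ᵥ w := lt_of_le_of_ne hww (Ne.symm h0)
    have h6 : (γ (k - 1) * (w ⬝ᵥ w)) ^ 2 ≤ (d * (w ⬝ᵥ u)) ^ 2 :=
      pow_le_pow_left₀ (by positivity) h5 2
    have h7 : (γ (k - 1)) ^ 2 * (w ⬝ᵥ w) ≤ d ^ 2 * (u ⬝ᵥ u) := by
      have h8 : ((γ (k - 1)) ^ 2 * (w ⬝ᵥ w)) * (w ⬝ᵥ w) ≤ (d ^ 2 * (u ⬝ᵥ u)) * (w ⬝ᵥ w) := by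
        nlinarith [h6, h3, sq_nonneg d]
      exact le_of_mul_le_mul_right h8 hwwpos
    rw [div_pow, div_mul_eq_mul_div, le_div_iff₀ (pow_pos hg0 2)]
    nlinarith [h7]

lemma spec_ge (hΓ : memG ψ γ d Γ) (hd : 1 ≤ d) (hγpos : ∀ j, 0 < γ j)
    (k : ℕ) (hk : 1 ≤ k) :
    d⁻¹ ≤ γ (k - 1) * specNorm (opMat ψ Γ k)⁻¹ := by
  have hd0 : (0:ℝ) < d := lt_of_lt_of_le one_pos hd
  have hg0 : 0 < γ (k - 1) := hγpos _
  set i0 : Fin k := ⟨k - 1, by omega⟩ with hi0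
  set e : Fin k → ℝ := Pi.single i0 1 with he
  have hvecHe : vecH ψ e = ψ (k - 1) := by
    rw [vecH]
    have hterm : ∀ j : Fin k, e j • ψ (j : ℕ) = if j = i0 then ψ ((i0 : ℕ)) else 0 := by
      intro j
      by_cases h : j = i0 <;> simp [he, Pi.single_apply, h]
    rw [Finset.sum_congr rfl fun j _ => hterm j, Finset.sum_ite_eq' Finset.univ i0]
    simp [hi0]
  set u : Fin k → ℝ := opMat ψ Γ k *ᵥ e with hu
  have hAu : (opMat ψ Γ k)⁻¹ *ᵥ u = e := opMat_inv_mulVec ψ Γ γ d hΓ e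
  have hee : e ⬝ᵥ e = 1 := by
    rw [he, dotProduct]
    simp [Pi.single_apply]
  have huu : u ⬝ᵥ u ≤ (d * γ (k - 1)) ^ 2 := by
    have h1 := norm_mulVec_opMat_le ψ Γ e
    rw [hvecHe] at h1
    have h2 := norm_Gpsi_le ψ Γ γ d hΓ hd hγpos (k - 1)
    have h3 := pow_le_pow_left₀ (norm_nonneg _) h2 2
    exact h1.trans h3
  have hkey := specNorm_ge (opMat ψ Γ k)⁻¹ u
  rw [hAu, hee, Real.sqrt_one] at hkey
  have h4 : Real.sqrt (u ⬝ᵥ u) ≤ d * γ (k - 1) := by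
    have := Real.sqrt_le_sqrt huu
    rwa [Real.sqrt_sq (by positivity)] at this
  have hsn : 0 ≤ specNorm (opMat ψ Γ k)⁻¹ := specNorm_nonneg _
  have h5 : 1 ≤ specNorm (opMat ψ Γ k)⁻¹ * (d * γ (k - 1)) :=
    hkey.trans (mul_le_mul_of_nonneg_left h4 hsn)
  rw [inv_eq_one_div, div_le_iff₀ hd0]
  nlinarith [h5]

end AuxJS8
set_option maxHeartbeats 1600000

/-- Lemma A.1 (i): comparison of `V_m`, `V_m^γ` and `‖[Γ]_m⁻¹‖` with `D = 4d³`. -/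
theorem stmt_10 (ψ : HilbertBasis ℕ ℝ H) (γ : ℕ → ℝ) (d : ℝ) (hd : 1 ≤ d)
    (hγ1 : γ 0 = 1) (hγpos : ∀ j, 0 < γ j) (hγanti : Antitone γ)
    (hγ0 : Filter.Tendsto γ Filter.atTop (nhds 0)) (hγsum : Summable γ)
    (β : ℕ → ℝ) (hβ1 : β 0 = 1) (hβmono : Monotone β)
    (hβ0 : Filter.Tendsto (fun j => (β j)⁻¹) Filter.atTop (nhds 0))
    (lc : ℕ → ℝ) (hl1 : lc 0 = 1) (hlβ : Summable (fun j => lc j ^ 2 / β j))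
    (Γ : H →L[ℝ] H) (hΓ : memG ψ γ d Γ) :
    ∀ m : ℕ, 1 ≤ m →
      (d⁻¹ ≤ Vmax ψ lc Γ m / Vgam lc γ m ∧ Vmax ψ lc Γ m / Vgam lc γ m ≤ 4 * d ^ 3) ∧
      (d⁻¹ ≤ γ (m - 1) * specNorm (opMat ψ Γ m)⁻¹ ∧
        γ (m - 1) * specNorm (opMat ψ Γ m)⁻¹ ≤ 4 * d ^ 3) ∧
      (d⁻¹ ≤ γ (m - 1) * ⨆ k : Fin m, specNorm (opMat ψ Γ (k + 1))⁻¹ ∧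
        γ (m - 1) * (⨆ k : Fin m, specNorm (opMat ψ Γ (k + 1))⁻¹) ≤ 4 * d ^ 3) := by
  intro m hm
  have hd0 : (0:ℝ) < d := lt_of_lt_of_le one_pos hd
  haveI : Nonempty (Fin m) := ⟨⟨0, by omega⟩⟩
  have hg0 : 0 < γ (m - 1) := hγpos _
  have hDle : d ≤ 4 * d ^ 3 := by
    have h1 : d * 1 ≤ d * d := mul_le_mul_of_nonneg_left hd (by linarith)
    have h2 : d * d ≤ d * (d * d) := by nlinarith
    nlinarith [h1, h2]
  set im : Fin m := ⟨m - 1, by omega⟩ with him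
  have him1 : ((im : ℕ) + 1) = m := by rw [him]; simp; omega
  -- (ii)
  have hii_le : γ (m - 1) * specNorm (opMat ψ Γ m)⁻¹ ≤ d := by
    have h := spec_le ψ Γ γ d hΓ hd hγ1 hγpos hγanti hγsum m hm
    have h2 := mul_le_mul_of_nonneg_left h hg0.le
    have heq : γ (m - 1) * (d / γ (m - 1)) = d := by field_simp
    rwa [heq] at h2
  have hii_ge : d⁻¹ ≤ γ (m - 1) * specNorm (opMat ψ Γ m)⁻¹ :=
    spec_ge ψ Γ γ d hΓ hd hγpos m hm
  -- (iii)
  have hbddS : BddAbove (Set.range fun k : Fin m => specNorm (opMat ψ Γ ((k : ℕ) + 1))⁻¹) :=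
    Set.Finite.bddAbove (Set.finite_range _)
  have hsup_le : (⨆ k : Fin m, specNorm (opMat ψ Γ ((k : ℕ) + 1))⁻¹) ≤ d / γ (m - 1) := by
    refine ciSup_le fun k => ?_
    have h := spec_le ψ Γ γ d hΓ hd hγ1 hγpos hγanti hγsum ((k : ℕ) + 1) (by omega)
    have hsimp : (k : ℕ) + 1 - 1 = (k : ℕ) := by omega
    rw [hsimp] at h
    refine h.trans ?_
    rw [div_le_div_iff₀ (hγpos _) (hγpos _)]
    exact mul_le_mul_of_nonneg_left (hγanti (by omega : (k : ℕ) ≤ m - 1)) hd0.le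
  have hiii_le : γ (m - 1) * (⨆ k : Fin m, specNorm (opMat ψ Γ ((k : ℕ) + 1))⁻¹) ≤ d := by
    have h2 := mul_le_mul_of_nonneg_left hsup_le hg0.le
    have heq : γ (m - 1) * (d / γ (m - 1)) = d := by field_simp
    rwa [heq] at h2
  have hiii_ge : d⁻¹ ≤ γ (m - 1) * ⨆ k : Fin m, specNorm (opMat ψ Γ ((k : ℕ) + 1))⁻¹ := by
    have h1 : specNorm (opMat ψ Γ ((im : ℕ) + 1))⁻¹
        ≤ ⨆ k : Fin m, specNorm (opMat ψ Γ ((k : ℕ) + 1))⁻¹ := le_ciSup hbddS im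
    rw [him1] at h1
    exact hii_ge.trans (mul_le_mul_of_nonneg_left h1 hg0.le)
  -- (i)
  have hVnn : ∀ j, 0 ≤ lc j ^ 2 / γ j := fun j => div_nonneg (sq_nonneg _) (hγpos _).le
  have hVpos : (0:ℝ) < Vgam lc γ m := by
    rw [Vgam]
    have h1 : lc 0 ^ 2 / γ 0 = 1 := by rw [hl1, hγ1]; norm_num
    have h2 : lc 0 ^ 2 / γ 0 ≤ ∑ j ∈ Finset.range m, lc j ^ 2 / γ j :=
      Finset.single_le_sum (f := fun j => lc j ^ 2 / γ j) (fun j _ => hVnn j)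
        (Finset.mem_range.mpr (by omega))
    rw [h1] at h2
    linarith
  have hVmono : ∀ k, k ≤ m → Vgam lc γ k ≤ Vgam lc γ m := by
    intro k hk
    rw [Vgam, Vgam]
    exact Finset.sum_le_sum_of_subset_of_nonneg (Finset.range_subset_range.mpr hk)
      (fun j _ _ => hVnn j)
  have hVgam_eq : ∀ k : ℕ, ∑ j : Fin k, (ellvec lc k) j ^ 2 / γ (j : ℕ) = Vgam lc γ k := by
    intro k
    rw [Vgam, ← Fin.sum_univ_eq_sum_range (fun j => lc j ^ 2 / γ j) k]
    rfl
  have hf_up : ∀ k : ℕ, ellvec lc k ⬝ᵥ ((opMat ψ Γ k)⁻¹ *ᵥ ellvec lc k) ≤ d * Vgam lc γ k := by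
    intro k
    have h := ell_upper ψ Γ γ d hΓ hd hγ1 hγpos hγanti hγsum (ellvec lc k)
    rwa [hVgam_eq k] at h
  have hf_lo : ∀ k : ℕ, d⁻¹ * Vgam lc γ k ≤ ellvec lc k ⬝ᵥ ((opMat ψ Γ k)⁻¹ *ᵥ ellvec lc k) := by
    intro k
    have h := ell_lower ψ Γ γ d hΓ hd hγ1 hγpos hγanti hγsum (ellvec lc k)
    rwa [hVgam_eq k] at h
  have hbddV : BddAbove (Set.range fun k : Fin m =>
      ellvec lc ((k : ℕ) + 1) ⬝ᵥ ((opMat ψ Γ ((k : ℕ) + 1))⁻¹ *ᵥ ellvec lc ((k : ℕ) + 1))) :=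
    Set.Finite.bddAbove (Set.finite_range _)
  have hVmax_le : Vmax ψ lc Γ m ≤ d * Vgam lc γ m := by
    rw [Vmax]
    refine ciSup_le fun k => ?_
    exact (hf_up ((k : ℕ) + 1)).trans
      (mul_le_mul_of_nonneg_left (hVmono ((k : ℕ) + 1) (by omega)) hd0.le)
  have hVmax_ge : d⁻¹ * Vgam lc γ m ≤ Vmax ψ lc Γ m := by
    rw [Vmax]
    have h1 : ellvec lc ((im : ℕ) + 1) ⬝ᵥ ((opMat ψ Γ ((im : ℕ) + 1))⁻¹
        *ᵥ ellvec lc ((im : ℕ) + 1)) ≤ ⨆ k : Fin m,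
        ellvec lc ((k : ℕ) + 1) ⬝ᵥ ((opMat ψ Γ ((k : ℕ) + 1))⁻¹ *ᵥ ellvec lc ((k : ℕ) + 1)) :=
      le_ciSup hbddV im
    rw [him1] at h1
    exact (hf_lo m).trans h1
  refine ⟨⟨?_, ?_⟩, ⟨hii_ge, hii_le.trans hDle⟩, ⟨hiii_ge, hiii_le.trans hDle⟩⟩
  · rw [le_div_iff₀ hVpos]
    exact hVmax_ge
  · rw [div_le_iff₀ hVpos]
    nlinarith [hVmax_le, hVpos, hDle, hVmono m le_rfl]

end
end
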